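/- arXiv:math/0409323 — 4 statements merged into one kernel-verified Lean document; each statement's English description precedes it below -/
import Mathlib

section
/- For every integer k ≥ 2 and positive integer n, the number of k-ary trees on [n] equals n! · (1/((k−1)n+1)) · binom(kn, n) = kn·(kn−1)⋯(kn−n+2). -/
/-- Labeled `k`-ary trees: each vertex has a label and `k` ordered (possibly empty)
subtrees, the subtree rooted at its `i`-th child. -/
inductive KT (k : ℕ) : Type
  | nil : KT k
  | node (label : ℕ) (children : Fin k → KT k) : KT k

/-- The multiset of labels of a `k`-ary tree. -/
def KT.labels {k : ℕ} : KT k → Multiset ℕ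
  | .nil => 0
  | .node a c => a ::ₘ ∑ i : Fin k, (c i).labels

/-- The number of *proper* vertices of a `k`-ary tree: a vertex is proper if its label
is the smallest label in its descendant subtree (including itself). -/
def KT.pv {k : ℕ} : KT k → ℕ
  | .nil => 0
  | .node a c =>
      (if ∀ i : Fin k, ∀ b ∈ (c i).labels, a ≤ b then 1 else 0) + ∑ i : Fin k, (c i).pv

/-- `𝒜ᵏ_n`: the `k`-ary trees on `[n] = {1,…,n}`. -/
def KTn (k n : ℕ) : Type := {T : KT k // T.labels = (Finset.Icc 1 n).val}

namespace KAux

def wt (k : ℕ) (b : Bool) : ℤ := if b then (k : ℤ) - 1 else -1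

def wsum (k : ℕ) (l : List Bool) : ℤ := (l.map (wt k)).sum

lemma wsum_nil (k : ℕ) : wsum k [] = 0 := rfl

lemma wsum_cons (k : ℕ) (b : Bool) (l : List Bool) :
    wsum k (b :: l) = wt k b + wsum k l := by simp [wsum]

lemma wsum_append (k : ℕ) (l₁ l₂ : List Bool) :
    wsum k (l₁ ++ l₂) = wsum k l₁ + wsum k l₂ := by simp [wsum]

lemma wsum_perm {k : ℕ} {l₁ l₂ : List Bool} (h : l₁.Perm l₂) : wsum k l₁ = wsum k l₂ :=
  (h.map (wt k)).sum_eq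

lemma wsum_eq_counts (k : ℕ) (l : List Bool) :
    wsum k l = (k : ℤ) * l.count true - l.length := by
  induction l with
  | nil => simp [wsum_nil]
  | cons b l ih =>
    rw [wsum_cons, ih]
    cases b <;> simp [wt, List.count_cons] <;> push_cast <;> ring

/-- Balanced words: code words of single `k`-ary trees. -/
def Bal (k : ℕ) (l : List Bool) : Prop :=
  wsum k l = -1 ∧ ∀ j < l.length, 0 ≤ wsum k (l.take j)

lemma length_of_bal {k n : ℕ} {w : List Bool} (hw : Bal k w) (hc : w.count true = n) :
    w.length = k * n + 1 := by
  have h := wsum_eq_counts k w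
  rw [hw.1, hc] at h
  have hcast : ((k * n : ℕ) : ℤ) = (k : ℤ) * n := by push_cast; ring
  omega

/-- Prefix sums of a rotation. -/
lemma wsum_take_rotate (k : ℕ) (w : List Bool) {i j : ℕ} (hi : i ≤ w.length)
    (hj : j ≤ w.length) :
    wsum k ((w.rotate i).take j) =
      if j ≤ w.length - i then wsum k (w.take (i + j)) - wsum k (w.take i)
      else wsum k w - wsum k (w.take i) + wsum k (w.take (j - (w.length - i))) := by
  rw [List.rotate_eq_drop_append_take hi, List.take_append]
  rw [List.length_drop]
  split_ifs with h
  · have h0 : j - (w.length - i) = 0 := by omega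
    rw [h0]
    have hadd : w.take (i + j) = w.take i ++ (w.drop i).take j := List.take_add
    rw [wsum_append, hadd, wsum_append]
    simp [wsum_nil]
  · have h1 : (w.drop i).take j = w.drop i := by
      apply List.take_of_length_le
      rw [List.length_drop]; omega
    have h2 : (w.take i).take (j - (w.length - i)) = w.take (j - (w.length - i)) := by
      rw [List.take_take]
      congr 1
      omega
    rw [h1, h2, wsum_append]
    have : w.take i ++ w.drop i = w := List.take_append_drop i w
    have h3 : wsum k (w.take i) + wsum k (w.drop i) = wsum k w := by
      rw [← wsum_append, this]
    linarith

lemma bal_rotate_iff (k : ℕ) (w : List Bool) (hw : wsum k w = -1) {i : ℕ}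
    (hi : i < w.length) :
    Bal k (w.rotate i) ↔
      ((∀ j < i, wsum k (w.take i) < wsum k (w.take j)) ∧
        ∀ j, i < j → j < w.length → wsum k (w.take i) ≤ wsum k (w.take j)) := by
  have hperm : wsum k (w.rotate i) = -1 := (wsum_perm (w.rotate_perm i)).trans hw
  have hlen : (w.rotate i).length = w.length := w.length_rotate i
  constructor
  · rintro ⟨-, h2⟩
    have key : ∀ j < w.length, 0 ≤ wsum k ((w.rotate i).take j) := by
      intro j hj; exact h2 j (hlen ▸ hj)
    have hP : wsum k (w.take i) ≤ -1 ∨ i = 0 := by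
      rcases Nat.eq_zero_or_pos i with h | h
      · right; exact h
      · left
        have hj : w.length - i < w.length := by omega
        have := key _ hj
        rw [wsum_take_rotate k w hi.le (by omega)] at this
        rw [if_pos (le_refl _)] at this
        have hfull : i + (w.length - i) = w.length := by omega
        rw [hfull, List.take_length, hw] at this
        linarith
    constructor
    · intro j hj
      have hi0 : 0 < i := by omega
      rcases Nat.eq_zero_or_pos j with rfl | hj0
      · simp only [List.take_zero, wsum_nil]
        rcases hP with h | h
        · linarith
        · omega
      · have hjj : j + (w.length - i) < w.length := by omega
        have := key _ hjj
        rw [wsum_take_rotate k w hi.le (by omega)] at this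
        rw [if_neg (by omega)] at this
        have : 0 ≤ wsum k w - wsum k (w.take i) + wsum k (w.take j) := by
          have harith : j + (w.length - i) - (w.length - i) = j := by omega
          rwa [harith] at this
        rw [hw] at this
        linarith
    · intro j hij hjlen
      have := key (j - i) (by omega)
      rw [wsum_take_rotate k w hi.le (by omega)] at this
      rw [if_pos (by omega)] at this
      have harith : i + (j - i) = j := by omega
      rw [harith] at this
      linarith
  · rintro ⟨h1, h2⟩
    refine ⟨hperm, ?_⟩
    intro j hj
    rw [hlen] at hj
    rw [wsum_take_rotate k w hi.le hj.le]
    split_ifs with h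
    · rcases Nat.lt_trichotomy (i + j) w.length with hc | hc | hc
      · rcases Nat.eq_zero_or_pos j with rfl | hj0
        · simp
        · have := h2 (i + j) (by omega) hc
          linarith
      · rw [hc, List.take_length, hw]
        have hi0 : 0 < i := by
          by_contra h0
          omega
        have := h1 0 hi0
        simp only [List.take_zero, wsum_nil] at this
        linarith
      · omega
    · have hj' : j - (w.length - i) < i := by omega
      have hj'0 : 0 < j - (w.length - i) := by omega
      have := h1 _ hj'
      rw [hw]
      linarith

theorem cycle_lemma (k : ℕ) (w : List Bool) (hw : wsum k w = -1) :
    ∃! i, i < w.length ∧ Bal k (w.rotate i) := by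
  have hlen : 0 < w.length := by
    rcases w with _ | ⟨b, t⟩
    · simp [wsum_nil] at hw
    · simp
  obtain ⟨j₀, hj₀, hmin⟩ := Finset.exists_min_image (Finset.range w.length)
    (fun j => wsum k (w.take j)) ⟨0, by simpa using hlen⟩
  rw [Finset.mem_range] at hj₀
  have hmin' : ∀ j < w.length, wsum k (w.take j₀) ≤ wsum k (w.take j) := by
    intro j hj; exact hmin j (Finset.mem_range.2 hj)
  have hex : ∃ i, i < w.length ∧ wsum k (w.take i) = wsum k (w.take j₀) := ⟨j₀, hj₀, rfl⟩
  classical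
  set i := Nat.find hex with hidef
  obtain ⟨hilt, hival⟩ := Nat.find_spec hex
  have hgood : Bal k (w.rotate i) := by
    rw [bal_rotate_iff k w hw hilt]
    constructor
    · intro j hj
      have h1 : wsum k (w.take j₀) ≤ wsum k (w.take j) := hmin' j (by omega)
      have h2 : ¬(j < w.length ∧ wsum k (w.take j) = wsum k (w.take j₀)) :=
        Nat.find_min hex hj
      rw [hival]
      rcases lt_or_eq_of_le h1 with h | h
      · exact h
      · exact absurd ⟨by omega, h.symm⟩ h2
    · intro j hij hj
      rw [hival]
      exact hmin' j hj
  refine ⟨i, ⟨hilt, hgood⟩, ?_⟩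
  rintro y ⟨hylt, hybal⟩
  by_contra hne
  rw [bal_rotate_iff k w hw hylt] at hybal
  rw [bal_rotate_iff k w hw hilt] at hgood
  rcases Nat.lt_trichotomy y i with h | h | h
  · have h1 := hgood.1 y h
    have h2 := hybal.2 i h hilt
    linarith
  · exact hne h
  · have h1 := hybal.1 i h
    have h2 := hgood.2 y h hylt
    linarith

end KAux


namespace KAux

/-- Forest-balanced words: concatenations of `m` balanced words. -/
def FBal (k m : ℕ) (l : List Bool) : Prop :=
  wsum k l = -(m : ℤ) ∧ ∀ j < l.length, -(m : ℤ) < wsum k (l.take j)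

lemma bal_iff_fbal_one (k : ℕ) (l : List Bool) : Bal k l ↔ FBal k 1 l := by
  unfold Bal FBal
  constructor <;> rintro ⟨h1, h2⟩ <;> refine ⟨by exact_mod_cast h1, fun j hj => ?_⟩
  · have := h2 j hj; omega
  · have := h2 j hj; omega

lemma fbal_zero {k : ℕ} {l : List Bool} (h : FBal k 0 l) : l = [] := by
  rcases l with _ | ⟨b, t⟩
  · rfl
  · have := h.2 0 (by simp)
    simp [wsum_nil] at this

lemma fbal_nil (k : ℕ) : FBal k 0 [] := by
  constructor
  · simp [wsum_nil]
  · intro j hj; simp at hj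

lemma bal_append_fbal {k m : ℕ} {u v : List Bool} (hu : Bal k u) (hv : FBal k m v) :
    FBal k (m + 1) (u ++ v) := by
  constructor
  · rw [wsum_append, hu.1, hv.1]; push_cast; ring
  · intro j hj
    rw [List.length_append] at hj
    rw [List.take_append, wsum_append]
    rcases lt_or_ge j u.length with h | h
    · have h0 : j - u.length = 0 := by omega
      rw [h0]
      have := hu.2 j h
      simp only [List.take_zero, wsum_nil]
      push_cast
      omega
    · have h1 : u.take j = u := List.take_of_length_le h
      rw [h1, hu.1]
      have := hv.2 (j - u.length) (by omega)
      push_cast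
      omega

lemma fbal_flatten {k : ℕ} : ∀ (ls : List (List Bool)), (∀ l ∈ ls, Bal k l) →
    FBal k ls.length ls.flatten := by
  intro ls
  induction ls with
  | nil => intro _; simpa using fbal_nil k
  | cons h t ih =>
    intro hall
    have := bal_append_fbal (hall h (by simp)) (ih fun l hl => hall l (by simp [hl]))
    simpa using this

/-- Peeling off the first balanced block of a nonempty forest word. -/
lemma exists_bal_prefix {k m : ℕ} (hm : 0 < m) {w : List Bool} (h : FBal k m w) :
    ∃ u v, w = u ++ v ∧ Bal k u ∧ FBal k (m - 1) v ∧ 0 < u.length := by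
  classical
  have hex : ∃ j, j ≤ w.length ∧ wsum k (w.take j) ≤ -1 := by
    refine ⟨w.length, le_refl _, ?_⟩
    rw [List.take_length, h.1]
    omega
  set j₀ := Nat.find hex with hj₀def
  obtain ⟨hj₀le, hj₀val⟩ := Nat.find_spec hex
  rw [← hj₀def] at hj₀le hj₀val
  have hpos : ∀ j < j₀, 0 ≤ wsum k (w.take j) := by
    intro j hj
    have h2 := Nat.find_min hex (hj₀def ▸ hj)
    push_neg at h2
    have := h2 (by omega)
    omega
  have hj₀pos : 0 < j₀ := by
    by_contra h0
    have h0' : j₀ = 0 := by omega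
    rw [h0'] at hj₀val
    simp [wsum_nil] at hj₀val
  obtain ⟨j₁, hj₁⟩ : ∃ j₁, j₀ = j₁ + 1 := ⟨j₀ - 1, by omega⟩
  have hstep : wsum k (w.take j₁) - 1 ≤ wsum k (w.take j₀) := by
    rw [hj₁, List.take_succ, wsum_append]
    have hopt1 : -1 ≤ wsum k (w[j₁]?.toList) := by
      rcases hopt : w[j₁]? with _ | b
      · simp [wsum_nil]
      · simp only [Option.toList_some]
        rw [show wsum k [b] = wt k b by simp [wsum]]
        unfold wt
        split
        · push_cast; omega
        · omega
    omega
  have hPj₀ : wsum k (w.take j₀) = -1 := by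
    have := hpos j₁ (by omega)
    omega
  refine ⟨w.take j₀, w.drop j₀, (List.take_append_drop j₀ w).symm, ⟨?_, ?_⟩, ⟨?_, ?_⟩, ?_⟩
  · exact hPj₀
  · intro j hj
    rw [List.length_take] at hj
    rw [List.take_take, min_eq_left (by omega)]
    exact hpos j (by omega)
  · have hsplit : wsum k (w.take j₀) + wsum k (w.drop j₀) = wsum k w := by
      rw [← wsum_append, List.take_append_drop]
    rw [h.1, hPj₀] at hsplit
    push_cast
    omega
  · intro j hj
    rw [List.length_drop] at hj
    have htake : w.take (j₀ + j) = w.take j₀ ++ (w.drop j₀).take j := List.take_add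
    have hfull := h.2 (j₀ + j) (by omega)
    rw [htake, wsum_append, hPj₀] at hfull
    push_cast at hfull ⊢
    omega
  · rw [List.length_take]; omega

end KAux

namespace KAux

/-- Preorder code word of a tree. -/
def code {k : ℕ} : KT k → List Bool
  | .nil => [false]
  | .node _ c => true :: (List.ofFn fun i => code (c i)).flatten

/-- Preorder label list of a tree. -/
def lab {k : ℕ} : KT k → List ℕ
  | .nil => []
  | .node a c => a :: (List.ofFn fun i => lab (c i)).flatten

def codeF {k : ℕ} (ts : List (KT k)) : List Bool := (ts.map code).flatten

def labF {k : ℕ} (ts : List (KT k)) : List ℕ := (ts.map lab).flatten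

@[simp] lemma codeF_nil {k : ℕ} : codeF ([] : List (KT k)) = [] := rfl
@[simp] lemma labF_nil {k : ℕ} : labF ([] : List (KT k)) = [] := rfl

lemma codeF_cons {k : ℕ} (T : KT k) (ts : List (KT k)) :
    codeF (T :: ts) = code T ++ codeF ts := by simp [codeF]

lemma labF_cons {k : ℕ} (T : KT k) (ts : List (KT k)) :
    labF (T :: ts) = lab T ++ labF ts := by simp [labF]

lemma codeF_append {k : ℕ} (ts ts' : List (KT k)) :
    codeF (ts ++ ts') = codeF ts ++ codeF ts' := by simp [codeF]

lemma labF_append {k : ℕ} (ts ts' : List (KT k)) :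
    labF (ts ++ ts') = labF ts ++ labF ts' := by simp [labF]

lemma code_node {k : ℕ} (a : ℕ) (c : Fin k → KT k) :
    code (KT.node a c) = true :: codeF (List.ofFn c) := by
  simp [code, codeF, List.map_ofFn]
  rfl

lemma lab_node {k : ℕ} (a : ℕ) (c : Fin k → KT k) :
    lab (KT.node a c) = a :: labF (List.ofFn c) := by
  simp [lab, labF, List.map_ofFn]
  rfl

lemma bal_code {k : ℕ} (T : KT k) : Bal k (code T) := by
  induction T with
  | nil =>
    constructor
    · simp [code, wsum, wt]
    · intro j hj
      simp only [code, List.length_cons, List.length_nil] at hj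
      have : j = 0 := by omega
      subst this
      simp [wsum_nil]
  | node a c ih =>
    rw [code_node]
    have hF : FBal k k (codeF (List.ofFn c)) := by
      have := fbal_flatten (k := k) ((List.ofFn c).map code) ?_
      · simpa [codeF, List.length_map, List.length_ofFn] using this
      · intro l hl
        rw [List.mem_map] at hl
        obtain ⟨T', hT', rfl⟩ := hl
        rw [List.mem_ofFn] at hT'
        obtain ⟨i, rfl⟩ := hT'
        exact ih i
    constructor
    · rw [wsum_cons, hF.1]
      unfold wt
      simp only [if_true]
      push_cast
      ring
    · intro j hj
      rcases Nat.eq_zero_or_pos j with rfl | hj0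
      · simp [wsum_nil]
      · obtain ⟨j', rfl⟩ : ∃ j', j = j' + 1 := ⟨j - 1, by omega⟩
        simp only [List.length_cons] at hj
        rw [List.take_succ_cons, wsum_cons]
        have h2 := hF.2 j' (by omega)
        unfold wt
        simp only [if_true]
        omega

end KAux


namespace KAux

lemma count_code {k : ℕ} (T : KT k) : (code T).count true = (lab T).length := by
  induction T with
  | nil => simp [code, lab]
  | node a c ih =>
    rw [code_node, lab_node]
    simp only [List.count_cons, List.length_cons, beq_self_eq_true, if_true]
    unfold codeF labF
    rw [List.count_flatten, List.length_flatten]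
    simp only [List.map_map, List.map_ofFn, List.sum_ofFn, Function.comp]
    congr 1
    exact Finset.sum_congr rfl fun i _ => ih i

lemma coe_flatten_multiset : ∀ ls : List (List ℕ),
    Multiset.ofList ls.flatten = (ls.map Multiset.ofList).sum := by
  intro ls
  induction ls with
  | nil => rfl
  | cons h t ih =>
    simp only [List.flatten_cons, List.map_cons, List.sum_cons, ← ih]
    rfl

lemma lab_coe {k : ℕ} (T : KT k) : ((lab T : List ℕ) : Multiset ℕ) = T.labels := by
  induction T with
  | nil => rfl
  | node a c ih =>
    rw [lab_node]
    show Multiset.ofList (a :: labF (List.ofFn c)) = _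
    rw [show Multiset.ofList (a :: labF (List.ofFn c)) =
      a ::ₘ Multiset.ofList (labF (List.ofFn c)) from rfl]
    unfold KT.labels labF
    congr 1
    rw [coe_flatten_multiset, List.map_map, List.map_ofFn, List.sum_ofFn]
    exact Finset.sum_congr rfl fun i _ => ih i

lemma code_ne_nil {k : ℕ} (T : KT k) : code T ≠ [] := by
  cases T <;> simp [code]

lemma codeF_inj {k : ℕ} : ∀ N (ts ts' : List (KT k)) (r r' : List Bool) (s s' : List ℕ),
    (codeF ts).length ≤ N → ts.length = ts'.length →
    codeF ts ++ r = codeF ts' ++ r' → labF ts ++ s = labF ts' ++ s' →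
    ts = ts' ∧ r = r' ∧ s = s' := by
  intro N
  induction N with
  | zero =>
    intro ts ts' r r' s s' hN hlen hc hl
    have hts : ts = [] := by
      cases ts with
      | nil => rfl
      | cons T rest =>
        exfalso
        rw [codeF_cons, List.length_append] at hN
        have := code_ne_nil T
        have : 0 < (code T).length := List.length_pos_iff.2 this
        omega
    subst hts
    have hts' : ts' = [] := List.length_eq_zero_iff.1 (by simpa using hlen.symm)
    subst hts'
    exact ⟨rfl, by simpa using hc, by simpa using hl⟩
  | succ N ih =>
    intro ts ts' r r' s s' hN hlen hc hl
    cases ts with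
    | nil =>
      have hts' : ts' = [] := List.length_eq_zero_iff.1 (by simpa using hlen.symm)
      subst hts'
      exact ⟨rfl, by simpa using hc, by simpa using hl⟩
    | cons T rest =>
      cases ts' with
      | nil => simp at hlen
      | cons T' rest' =>
        have hlen' : rest.length = rest'.length := by simpa using hlen
        cases T with
        | nil =>
          cases T' with
          | node a' c' =>
            exfalso
            rw [codeF_cons, codeF_cons, code_node] at hc
            simp [code] at hc
          | nil =>
            have hc' : codeF rest ++ r = codeF rest' ++ r' := by
              rw [codeF_cons, codeF_cons] at hc
              simpa [code] using hc
            have hl' : labF rest ++ s = labF rest' ++ s' := by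
              rw [labF_cons, labF_cons] at hl
              simpa [lab] using hl
            have hNle : (codeF rest).length ≤ N := by
              rw [codeF_cons, List.length_append] at hN
              simp [code] at hN
              omega
            obtain ⟨hrest, hr, hs⟩ := ih rest rest' r r' s s' hNle hlen' hc' hl'
            exact ⟨by rw [hrest], hr, hs⟩
        | node a c =>
          cases T' with
          | nil =>
            exfalso
            rw [codeF_cons, codeF_cons, code_node] at hc
            simp [code] at hc
          | node a' c' =>
            have hc' : codeF (List.ofFn c ++ rest) ++ r = codeF (List.ofFn c' ++ rest') ++ r' := by
              rw [codeF_append, codeF_append, List.append_assoc, List.append_assoc]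
              rw [codeF_cons, codeF_cons, code_node, code_node] at hc
              simpa using hc
            rw [labF_cons, labF_cons, lab_node, lab_node] at hl
            simp only [List.cons_append, List.cons.injEq, List.append_assoc] at hl
            have haa : a = a' := hl.1
            have hl' : labF (List.ofFn c ++ rest) ++ s = labF (List.ofFn c' ++ rest') ++ s' := by
              rw [labF_append, labF_append, List.append_assoc, List.append_assoc]
              exact hl.2
            have hNle : (codeF (List.ofFn c ++ rest)).length ≤ N := by
              rw [codeF_cons, List.length_append, code_node, List.length_cons] at hN
              rw [codeF_append, List.length_append]
              omega
            obtain ⟨heq, hr, hs⟩ := ih (List.ofFn c ++ rest) (List.ofFn c' ++ rest') r r' s s'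
              hNle (by simp [hlen']) hc' hl'
            obtain ⟨hc1, hc2⟩ := List.append_inj heq (by simp)
            have hcc : c = c' := List.ofFn_inj.1 hc1
            exact ⟨by rw [haa, hcc, hc2], hr, hs⟩

end KAux


namespace KAux

lemma exists_parse {k : ℕ} : ∀ N (w : List Bool), w.length ≤ N → ∀ (m : ℕ) (l : List ℕ),
    FBal k m w → l.length = w.count true →
    ∃ ts : List (KT k), ts.length = m ∧ codeF ts = w ∧ labF ts = l := by
  intro N
  induction N with
  | zero =>
    intro w hN m l hF hl
    have hw : w = [] := List.length_eq_zero_iff.1 (by omega)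
    subst hw
    have hm : m = 0 := by
      have := hF.1
      rw [wsum_nil] at this
      omega
    subst hm
    have : l = [] := List.length_eq_zero_iff.1 (by simpa using hl)
    subst this
    exact ⟨[], rfl, rfl, rfl⟩
  | succ N ih =>
    intro w hN m l hF hl
    rcases Nat.eq_zero_or_pos m with rfl | hm
    · have hw : w = [] := fbal_zero hF
      subst hw
      have : l = [] := List.length_eq_zero_iff.1 (by simpa using hl)
      subst this
      exact ⟨[], rfl, rfl, rfl⟩
    · obtain ⟨u, v, rfl, hu, hv, hulen⟩ := exists_bal_prefix hm hF
      -- split the labels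
      have hcount : (u ++ v).count true = u.count true + v.count true := List.count_append
      obtain ⟨l₁, l₂, hsplit, hl₁len, hl₂len⟩ :
          ∃ l₁ l₂ : List ℕ, l = l₁ ++ l₂ ∧ l₁.length = u.count true ∧
            l₂.length = v.count true := by
        refine ⟨l.take (u.count true), l.drop (u.count true),
          (List.take_append_drop _ l).symm, ?_, ?_⟩
        · rw [List.length_take]
          omega
        · rw [List.length_drop]
          omega
      -- parse v
      have hvN : v.length ≤ N := by
        rw [List.length_append] at hN
        omega
      obtain ⟨ts₂, hts₂len, hts₂code, hts₂lab⟩ := ih v hvN (m - 1) l₂ hv hl₂len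
      -- parse u into a single tree
      obtain ⟨b, u₂, rfl⟩ : ∃ b u₂, u = b :: u₂ := by
        rcases u with _ | ⟨b, u₂⟩
        · simp at hulen
        · exact ⟨b, u₂, rfl⟩
      have huN : u₂.length ≤ N := by
        rw [List.length_append, List.length_cons] at hN
        omega
      obtain ⟨T, hTcode, hTlab⟩ : ∃ T : KT k, code T = b :: u₂ ∧ lab T = l₁ := by
        cases b with
        | false =>
          -- u₂ must be empty
          have hu₂ : FBal k 0 u₂ := by
            constructor
            · have := hu.1
              rw [wsum_cons] at this
              unfold wt at this
              simp only [Bool.false_eq_true, if_false] at this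
              omega
            · intro j hj
              have := hu.2 (j + 1) (by simpa using Nat.succ_lt_succ hj)
              rw [List.take_succ_cons, wsum_cons] at this
              unfold wt at this
              simp only [Bool.false_eq_true, if_false] at this
              push_cast
              omega
          have hu₂nil : u₂ = [] := fbal_zero hu₂
          subst hu₂nil
          have hl₁nil : l₁ = [] := by
            apply List.length_eq_zero_iff.1
            rw [hl₁len]
            simp
          exact ⟨KT.nil, by simp [code], by simp [lab, hl₁nil]⟩
        | true =>
          have hu₂ : FBal k k u₂ := by
            constructor
            · have := hu.1
              rw [wsum_cons] at this
              unfold wt at this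
              simp only [if_true] at this
              omega
            · intro j hj
              have := hu.2 (j + 1) (by simpa using Nat.succ_lt_succ hj)
              rw [List.take_succ_cons, wsum_cons] at this
              unfold wt at this
              simp only [if_true] at this
              omega
          obtain ⟨a, l₁', rfl⟩ : ∃ a l₁', l₁ = a :: l₁' := by
            rcases l₁ with _ | ⟨a, l₁'⟩
            · exfalso
              rw [List.count_cons] at hl₁len
              simp at hl₁len
            · exact ⟨a, l₁', rfl⟩
          have hl₁'len : l₁'.length = u₂.count true := by
            have := hl₁len
            rw [List.count_cons] at this
            simp at this
            omega
          obtain ⟨cs, hcslen, hcscode, hcslab⟩ := ih u₂ huN k l₁' hu₂ hl₁'len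
          refine ⟨KT.node a (fun i => cs.get (Fin.cast hcslen.symm i)), ?_, ?_⟩
          · rw [code_node]
            congr 1
            have hofn : List.ofFn (fun i : Fin k => cs.get (Fin.cast hcslen.symm i)) = cs := by
              apply List.ext_getElem
              · simp [hcslen]
              · intro i h1 h2
                simp [List.getElem_ofFn]
            rw [hofn, hcscode]
          · rw [lab_node]
            congr 1
            have hofn : List.ofFn (fun i : Fin k => cs.get (Fin.cast hcslen.symm i)) = cs := by
              apply List.ext_getElem
              · simp [hcslen]
              · intro i h1 h2
                simp [List.getElem_ofFn]
            rw [hofn, hcslab]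
      refine ⟨T :: ts₂, ?_, ?_, ?_⟩
      · rw [List.length_cons, hts₂len]
        omega
      · rw [codeF_cons, hTcode, hts₂code]
      · rw [labF_cons, hTlab, hts₂lab, hsplit]

end KAux

namespace KAux

lemma ofFn_add_rotate {L : ℕ} (v : Fin L → Bool) (c : Fin L) :
    List.ofFn (fun i => v (i + c)) = (List.ofFn v).rotate c.val := by
  have hL : 0 < L := c.pos
  apply List.ext_getElem
  · simp
  · intro i h1 h2
    rw [List.getElem_ofFn, List.getElem_rotate, List.getElem_ofFn]
    congr 1
    rw [Fin.add_def]
    simp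

lemma count_ofFn_sum {L : ℕ} (v : Fin L → Bool) :
    (List.ofFn v).count true = (Finset.univ.filter fun i => v i = true).card := by
  rw [Finset.card_filter]
  induction L with
  | zero => simp
  | succ L ih =>
    rw [List.ofFn_succ, List.count_cons, ih (fun i => v i.succ), Fin.sum_univ_succ]
    cases h : v 0 <;> simp [h] <;> omega

/-- The number of lists that are permutations of the standard list on `[n]`. -/
lemma card_perm_lists (n : ℕ) :
    Nat.card {l : List ℕ // Multiset.ofList l = (Finset.Icc 1 n).val} = n.factorial := by
  classical
  set L0 := (Finset.Icc 1 n).toList with hL0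
  have he : {l : List ℕ // Multiset.ofList l = (Finset.Icc 1 n).val} ≃
      {l : List ℕ // l ∈ L0.permutations.toFinset} := by
    apply Equiv.subtypeEquivRight
    intro l
    rw [List.mem_toFinset, List.mem_permutations]
    constructor
    · intro h
      apply Multiset.coe_eq_coe.1
      rw [h, hL0, Finset.coe_toList]
    · intro h
      have : Multiset.ofList l = Multiset.ofList L0 := Multiset.coe_eq_coe.2 h
      rw [this, hL0, Finset.coe_toList]
  rw [Nat.card_congr he, Nat.card_eq_fintype_card, Fintype.card_coe]
  rw [List.toFinset_card_of_nodup (List.nodup_permutations L0 (Finset.nodup_toList _))]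
  rw [List.length_permutations, hL0, Finset.length_toList, Nat.card_Icc]
  simp

end KAux


namespace KAux

/-- Encoding: `k`-ary trees on `[n]` correspond to pairs (balanced word, label list). -/
lemma card_KTn_eq_card_pairs (k n : ℕ) :
    Nat.card (KTn k n) =
      Nat.card {p : List Bool × List ℕ // Bal k p.1 ∧ p.2.length = p.1.count true ∧
        Multiset.ofList p.2 = (Finset.Icc 1 n).val} := by
  apply Nat.card_eq_of_bijective
    (fun T => ⟨(code T.1, lab T.1), bal_code T.1, (count_code T.1).symm, by
      show Multiset.ofList (lab T.1) = _
      rw [lab_coe]; exact T.2⟩)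
  constructor
  · rintro ⟨T, hT⟩ ⟨T', hT'⟩ h
    simp only [Subtype.mk.injEq, Prod.mk.injEq] at h
    obtain ⟨hcode, hlab⟩ := h
    have := codeF_inj (codeF [T]).length [T] [T'] [] [] [] [] (le_refl _) rfl
      (by simp [codeF_cons, hcode]) (by simp [labF_cons, hlab])
    have hTT : T = T' := by
      have := this.1
      simpa using this
    exact Subtype.ext hTT
  · rintro ⟨⟨w, l⟩, hbal, hlen, hms⟩
    obtain ⟨ts, hts1, hts2, hts3⟩ := exists_parse w.length w (le_refl _) 1 l
      ((bal_iff_fbal_one k w).1 hbal) hlen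
    obtain ⟨T, rfl⟩ : ∃ T : KT k, ts = [T] := by
      rcases ts with _ | ⟨T, _ | _⟩ <;> simp_all
    have hcode : code T = w := by simpa [codeF_cons] using hts2
    have hlab : lab T = l := by simpa [labF_cons] using hts3
    refine ⟨⟨T, ?_⟩, ?_⟩
    · rw [← lab_coe, hlab]
      exact hms
    · apply Subtype.ext
      simp [hcode, hlab]

/-- Splitting off the label component. -/
lemma card_pairs_eq (k n : ℕ) :
    Nat.card {p : List Bool × List ℕ // Bal k p.1 ∧ p.2.length = p.1.count true ∧
        Multiset.ofList p.2 = (Finset.Icc 1 n).val} =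
      Nat.card {w : List Bool // Bal k w ∧ w.count true = n} * n.factorial := by
  rw [← card_perm_lists n, ← Nat.card_prod]
  apply Nat.card_congr
  have hlenIcc : Multiset.card (Finset.Icc 1 n).val = n := by
    have : (Finset.Icc 1 n).card = n := by rw [Nat.card_Icc]; omega
    exact this
  refine ⟨fun p => (⟨p.1.1, p.2.1, ?_⟩, ⟨p.1.2, p.2.2.2⟩),
    fun q => ⟨(q.1.1, q.2.1), q.1.2.1, ?_, q.2.2⟩, fun p => ?_, fun q => ?_⟩
  · -- count true = n
    have h1 := p.2.2.1
    have h2 := p.2.2.2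
    have : (Multiset.ofList p.1.2).card = n := by rw [h2]; exact hlenIcc
    simp only [Multiset.coe_card] at this
    omega
  · -- length = count true
    have h2 := q.2.2
    have : (Multiset.ofList q.2.1).card = n := by rw [h2]; exact hlenIcc
    simp only [Multiset.coe_card] at this
    rw [this, q.1.2.2]
  · apply Subtype.ext; simp
  · apply Prod.ext <;> apply Subtype.ext <;> simp

/-- Transport balanced words to functions on `Fin (k*n+1)`. -/
lemma card_words_eq (k n : ℕ) :
    Nat.card {w : List Bool // Bal k w ∧ w.count true = n} =
      Nat.card {v : Fin (k * n + 1) → Bool //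
        Bal k (List.ofFn v) ∧ (List.ofFn v).count true = n} := by
  apply Nat.card_congr
  refine ⟨fun w => ⟨fun i => w.1.get (Fin.cast (length_of_bal w.2.1 w.2.2).symm i), ?_⟩,
    fun v => ⟨List.ofFn v.1, v.2⟩, fun w => ?_, fun v => ?_⟩
  · have hofn : List.ofFn (fun i : Fin (k*n+1) =>
        w.1.get (Fin.cast (length_of_bal w.2.1 w.2.2).symm i)) = w.1 := by
      apply List.ext_getElem
      · simp [length_of_bal w.2.1 w.2.2]
      · intro i h1 h2
        rw [List.getElem_ofFn]
        simp [List.get_eq_getElem]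
    rw [hofn]
    exact w.2
  · apply Subtype.ext
    apply List.ext_getElem
    · simp [length_of_bal w.2.1 w.2.2]
    · intro i h1 h2
      rw [List.getElem_ofFn]
      simp [List.get_eq_getElem]
  · apply Subtype.ext
    funext i
    show (List.ofFn v.1).get _ = v.1 i
    rw [List.get_eq_getElem, List.getElem_ofFn]
    congr 1

end KAux


namespace KAux

lemma wsum_ofFn_all {k n : ℕ} (u : Fin (k * n + 1) → Bool)
    (hu : (List.ofFn u).count true = n) : wsum k (List.ofFn u) = -1 := by
  have h := wsum_eq_counts k (List.ofFn u)
  rw [hu, List.length_ofFn] at h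
  rw [h]
  push_cast
  ring

lemma card_valid_words_mul (k n : ℕ) :
    Nat.card {v : Fin (k * n + 1) → Bool //
        Bal k (List.ofFn v) ∧ (List.ofFn v).count true = n} * (k * n + 1) =
      Nat.card {v : Fin (k * n + 1) → Bool // (List.ofFn v).count true = n} := by
  have hL : 0 < k * n + 1 := Nat.succ_pos _
  rw [show Nat.card {v : Fin (k * n + 1) → Bool //
        Bal k (List.ofFn v) ∧ (List.ofFn v).count true = n} * (k * n + 1) =
      Nat.card ({v : Fin (k * n + 1) → Bool //
        Bal k (List.ofFn v) ∧ (List.ofFn v).count true = n} × Fin (k * n + 1)) by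
    rw [Nat.card_prod]
    congr 1
    rw [Nat.card_eq_fintype_card, Fintype.card_fin]]
  apply Nat.card_eq_of_bijective
    (fun p => ⟨fun i => p.1.1 (i + p.2), by
      rw [ofFn_add_rotate]
      exact (((List.ofFn p.1.1).rotate_perm p.2.val).count_eq true).trans p.1.2.2⟩)
  constructor
  · rintro ⟨⟨v, hv⟩, c⟩ ⟨⟨v', hv'⟩, c'⟩ h
    simp only [Subtype.mk.injEq] at h
    have hfun : (fun i => v (i + c)) = fun i => v' (i + c') := h
    have hv'eq : v' = fun x => v (x + (c - c')) := by
      funext x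
      have h1 := congrFun hfun (x - c')
      have e1 : x - c' + c' = x := by abel
      have e2 : x - c' + c = x + (c - c') := by abel
      rw [e1, e2] at h1
      exact h1.symm
    have hws : wsum k (List.ofFn v) = -1 := wsum_ofFn_all v hv.2
    obtain ⟨i₀, -, huniq⟩ := cycle_lemma k (List.ofFn v) hws
    have hlen : (List.ofFn v).length = k * n + 1 := List.length_ofFn
    have hd : (c - c').val = 0 := by
      have hb1 : Bal k ((List.ofFn v).rotate ((c - c').val)) := by
        rw [← ofFn_add_rotate, ← hv'eq]
        exact hv'.1
      have hb0 : Bal k ((List.ofFn v).rotate 0) := by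
        rw [List.rotate_zero]
        exact hv.1
      have e1 := huniq ((c - c').val) ⟨by rw [hlen]; exact (c - c').isLt, hb1⟩
      have e2 := huniq 0 ⟨by rw [hlen]; exact hL, hb0⟩
      rw [e1, e2]
    have hcc : c = c' := by
      have : c - c' = 0 := Fin.ext hd
      exact sub_eq_zero.1 this
    subst hcc
    have hvv : v = v' := by
      funext x
      have h1 := congrFun hfun (x - c)
      have e1 : x - c + c = x := by abel
      rw [e1] at h1
      exact h1
    subst hvv
    rfl
  · rintro ⟨u, hu⟩
    have hws := wsum_ofFn_all u hu
    obtain ⟨i, ⟨hiL, hib⟩, -⟩ := cycle_lemma k (List.ofFn u) hws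
    rw [List.length_ofFn] at hiL
    set ci : Fin (k * n + 1) := ⟨i, hiL⟩ with hcidef
    have hofn : List.ofFn (fun x => u (x + ci)) = (List.ofFn u).rotate i :=
      ofFn_add_rotate u ci
    have hbal : Bal k (List.ofFn (fun x => u (x + ci))) := by rw [hofn]; exact hib
    have hcnt : (List.ofFn (fun x => u (x + ci))).count true = n := by
      rw [hofn]
      exact (((List.ofFn u).rotate_perm i).count_eq true).trans hu
    refine ⟨⟨⟨fun x => u (x + ci), hbal, hcnt⟩,
      ⟨(k * n + 1 - i) % (k * n + 1), Nat.mod_lt _ hL⟩⟩, ?_⟩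
    apply Subtype.ext
    funext x
    show u ((x + _) + ci) = u x
    congr 1
    have hzero : (⟨(k * n + 1 - i) % (k * n + 1), Nat.mod_lt _ hL⟩ : Fin (k * n + 1)) + ci
        = 0 := by
      apply Fin.ext
      rw [Fin.add_def]
      show ((k * n + 1 - i) % (k * n + 1) + i) % (k * n + 1) = 0
      rw [Nat.mod_add_mod, Nat.sub_add_cancel hiL.le, Nat.mod_self]
    rw [add_assoc, hzero, add_zero]

lemma card_all_words (k n : ℕ) :
    Nat.card {v : Fin (k * n + 1) → Bool // (List.ofFn v).count true = n} =
      (k * n + 1).choose n := by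
  classical
  have he : {v : Fin (k * n + 1) → Bool // (List.ofFn v).count true = n} ≃
      {s : Finset (Fin (k * n + 1)) // s.card = n} :=
    ⟨fun v => ⟨Finset.univ.filter (fun i => v.1 i = true), by
        rw [← count_ofFn_sum]; exact v.2⟩,
     fun s => ⟨fun i => decide (i ∈ s.1), by
        rw [count_ofFn_sum]
        simpa using s.2⟩,
     fun v => Subtype.ext (funext fun i => by simp),
     fun s => Subtype.ext (by simp)⟩
  rw [Nat.card_congr he, Nat.card_eq_fintype_card, Fintype.card_subtype]
  have hps : Finset.univ.filter (fun s : Finset (Fin (k * n + 1)) => s.card = n) =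
      Finset.powersetCard n Finset.univ := by
    ext s
    simp [Finset.mem_powersetCard]
  rw [hps, Finset.card_powersetCard]
  congr 1
  simp

end KAux


namespace KAux

lemma prod_desc (a : ℕ) : ∀ m : ℕ, m ≤ a →
    ∏ i ∈ Finset.range m, ((a : ℚ) - i) = a.factorial / (a - m).factorial := by
  intro m
  induction m with
  | zero =>
    intro _
    rw [Finset.range_zero, Finset.prod_empty, Nat.sub_zero,
      div_self (Nat.cast_ne_zero.2 (Nat.factorial_ne_zero a))]
  | succ m ih =>
    intro h
    rw [Finset.prod_range_succ, ih (by omega)]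
    have hfacQ : ((a - m).factorial : ℚ) = ((a : ℚ) - m) * ((a - (m + 1)).factorial : ℚ) := by
      rw [show a - m = (a - (m + 1)) + 1 from by omega, Nat.factorial_succ]
      have : ((a - (m + 1) + 1 : ℕ) : ℚ) = (a : ℚ) - m := by
        push_cast [Nat.cast_sub (show m + 1 ≤ a from h)]
        ring
      rw [Nat.cast_mul, this]
    rw [hfacQ]
    have hne1 : ((a : ℚ) - m) ≠ 0 := by
      have : (m : ℚ) + 1 ≤ a := by exact_mod_cast h
      linarith
    have hne2 : ((a - (m + 1)).factorial : ℚ) ≠ 0 :=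
      Nat.cast_ne_zero.2 (Nat.factorial_ne_zero _)
    field_simp

lemma main_count (k n : ℕ) :
    Nat.card (KTn k n) * (k * n + 1) = n.factorial * ((k * n + 1).choose n) := by
  rw [card_KTn_eq_card_pairs, card_pairs_eq, card_words_eq, mul_right_comm,
    card_valid_words_mul, card_all_words]
  exact mul_comm _ _

end KAux

/-- The number of `k`-ary trees on `[n]` equals
`n! · (1/((k−1)n+1)) · binom(kn, n) = kn·(kn−1)⋯(kn−n+2)`. -/
theorem card_karyTrees (k n : ℕ) (hk : 2 ≤ k) (hn : 0 < n) :
    (Nat.card (KTn k n) : ℚ) =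
        n.factorial * (1 / (((k : ℚ) - 1) * n + 1)) * ((k * n).choose n) ∧
      (Nat.card (KTn k n) : ℚ) = ∏ i ∈ Finset.range (n - 1), ((k * n : ℚ) - i) := by
  have hd2 : ((k : ℚ) * n + 1) ≠ 0 := by positivity
  have hceq : (Nat.card (KTn k n) : ℚ) =
      n.factorial * ((k * n + 1).choose n : ℚ) / ((k : ℚ) * n + 1) := by
    have h := congrArg (fun x : ℕ => (x : ℚ)) (KAux.main_count k n)
    push_cast at h
    rw [eq_div_iff hd2]
    exact h
  have hnk : n ≤ k * n := Nat.le_mul_of_pos_left n (by omega)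
  constructor
  · rw [hceq]
    have hid := Nat.choose_mul_succ_eq (k * n) n
    have hidQ : ((k * n).choose n : ℚ) * ((k : ℚ) * n + 1) =
        ((k * n + 1).choose n : ℚ) * (((k : ℚ) - 1) * n + 1) := by
      have h2 := congrArg (fun x : ℕ => (x : ℚ)) hid
      push_cast [Nat.cast_sub (show n ≤ k * n + 1 by omega)] at h2
      linear_combination h2
    have hd1 : (((k : ℚ) - 1) * n + 1) ≠ 0 := by
      have hk2 : (2 : ℚ) ≤ (k : ℚ) := by exact_mod_cast hk
      have hn0 : (0 : ℚ) ≤ (n : ℚ) := by positivity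
      nlinarith
    rw [eq_div_of_mul_eq hd2 hidQ]
    field_simp
    rw [mul_div_assoc, div_self (by rw [mul_comm]; exact hd1), mul_one]
  · rw [hceq]
    have hprod := KAux.prod_desc (k * n) (n - 1) (by omega)
    push_cast at hprod
    rw [hprod]
    have h1 : k * n - (n - 1) = k * n + 1 - n := by omega
    rw [h1, Nat.cast_choose ℚ (show n ≤ k * n + 1 by omega)]
    rw [show (k * n + 1).factorial = (k * n + 1) * (k * n).factorial from Nat.factorial_succ _]
    have hne2 : ((k * n + 1 - n).factorial : ℚ) ≠ 0 := Nat.cast_ne_zero.2 (Nat.factorial_ne_zero _)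
    have hne3 : ((n.factorial : ℚ)) ≠ 0 := Nat.cast_ne_zero.2 (Nat.factorial_ne_zero _)
    push_cast
    field_simp
end

section
/- Fix an integer k ≥ 2 and a parameter t. Let a_n(t) = Σ_{T ∈ 𝒜^k_n} t^{pv(T)} (with a_0(t) = 1) and let A(x) = Σ_{n≥0} a_n(t) x^n / n! be its exponential generating function, as a formal power series. Then A satisfies the differential equation A' = k·x·A^{k−1}·A' + t·A^k with A(0) = 1, where A' denotes the derivative with respect to x. -/
instance instDecEqKT {k : ℕ} : DecidableEq (KT k)
  | .nil, .nil => isTrue rfl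
  | .nil, .node _ _ => isFalse (fun h => by cases h)
  | .node _ _, .nil => isFalse (fun h => by cases h)
  | .node a c, .node a' c' =>
      have : ∀ i, Decidable (c i = c' i) := fun i => instDecEqKT (c i) (c' i)
      decidable_of_iff (a = a' ∧ ∀ i, c i = c' i)
        (by constructor
            · rintro ⟨rfl, h⟩
              rw [funext h]
            · intro h
              injection h with h1 h2
              exact ⟨h1, fun i => congrFun h2 i⟩)

def splits (k : ℕ) (u : Multiset ℕ) : Finset (Fin k → Multiset ℕ) :=
  (Fintype.piFinset fun _ : Fin k => u.powerset.toFinset).filter fun p => ∑ i, p i = u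

lemma mem_splits {k : ℕ} {u : Multiset ℕ} {p : Fin k → Multiset ℕ} :
    p ∈ splits k u ↔ ∑ i, p i = u := by
  simp only [splits, Finset.mem_filter, Fintype.mem_piFinset, Multiset.mem_toFinset,
    Multiset.mem_powerset, and_iff_right_iff_imp]
  intro h i
  rw [← h]
  exact Finset.single_le_sum (fun j _ => zero_le) (Finset.mem_univ i)

lemma le_of_mem_splits {k : ℕ} {u : Multiset ℕ} {p : Fin k → Multiset ℕ}
    (hp : p ∈ splits k u) (i : Fin k) : p i ≤ u := by
  rw [← mem_splits.1 hp]
  exact Finset.single_le_sum (fun j _ => zero_le) (Finset.mem_univ i)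

def allTrees (k : ℕ) (s : Multiset ℕ) : Finset (KT k) :=
  if h : s = 0 then {KT.nil}
  else
    ((s.toFinset.sigma fun a => splits k (s.erase a)).attach).biUnion fun x =>
      (Fintype.piFinset fun i => allTrees k (x.1.2 i)).image (KT.node x.1.1)
termination_by Multiset.card s
decreasing_by
  have hx := x.2
  rw [Finset.mem_sigma] at hx
  have h1 : x.1.2 i ≤ s.erase x.1.1 := le_of_mem_splits hx.2 i
  have h2 : Multiset.card (s.erase x.1.1) = Multiset.card s - 1 :=
    Multiset.card_erase_of_mem (Multiset.mem_toFinset.1 hx.1)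
  have h3 := Multiset.card_le_card h1
  have h4 : 0 < Multiset.card s := Multiset.card_pos.2 h
  omega

lemma mem_allTrees {k : ℕ} : ∀ (T : KT k), T ∈ allTrees k T.labels := by
  intro T
  induction T with
  | nil => rw [allTrees]; simp [KT.labels]
  | node a c ih =>
    rw [allTrees]
    rw [dif_neg (show (KT.node a c).labels ≠ 0 from Multiset.cons_ne_zero)]
    simp only [KT.labels]
    refine Finset.mem_biUnion.2 ⟨⟨⟨a, fun i => (c i).labels⟩, ?_⟩, Finset.mem_attach _ _, ?_⟩
    · rw [Finset.mem_sigma]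
      constructor
      · exact Multiset.mem_toFinset.2 (Multiset.mem_cons_self _ _)
      · exact mem_splits.2 (by rw [Multiset.erase_cons_head])
    · exact Finset.mem_image.2 ⟨c, Fintype.mem_piFinset.2 (fun i => ih i), rfl⟩

def treeSet (k : ℕ) (s : Multiset ℕ) : Finset (KT k) :=
  (allTrees k s).filter fun T => T.labels = s

lemma mem_treeSet {k : ℕ} {s : Multiset ℕ} {T : KT k} : T ∈ treeSet k s ↔ T.labels = s :=
  ⟨fun h => (Finset.mem_filter.1 h).2, fun h => Finset.mem_filter.2 ⟨h ▸ mem_allTrees T, h⟩⟩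

noncomputable def bval (k : ℕ) (t : ℚ) (s : Multiset ℕ) : ℚ := ∑ T ∈ treeSet k s, t ^ T.pv

def KT.relabel {k : ℕ} (f : ℕ → ℕ) : KT k → KT k
  | .nil => .nil
  | .node a c => .node (f a) (fun i => (c i).relabel f)

lemma labels_relabel {k : ℕ} (f : ℕ → ℕ) (T : KT k) :
    (T.relabel f).labels = T.labels.map f := by
  induction T with
  | nil => rfl
  | node a c ih =>
    simp only [KT.relabel, KT.labels, Multiset.map_cons]
    congr 1
    simp only [ih]
    rw [← Multiset.coe_mapAddMonoidHom, ← map_sum]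

lemma pv_relabel {k : ℕ} (f : ℕ → ℕ) (T : KT k)
    (hf : ∀ x ∈ T.labels, ∀ y ∈ T.labels, (f x ≤ f y ↔ x ≤ y)) :
    (T.relabel f).pv = T.pv := by
  induction T with
  | nil => rfl
  | node a c ih =>
    have hmem : ∀ i : Fin k, ∀ b ∈ (c i).labels, b ∈ (KT.node a c).labels := by
      intro i b hb
      exact Multiset.mem_cons_of_mem (Multiset.mem_sum.2 ⟨i, Finset.mem_univ i, hb⟩)
    have ha : a ∈ (KT.node a c).labels := Multiset.mem_cons_self _ _
    simp only [KT.relabel, KT.pv]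
    congr 1
    · have hiff : (∀ i : Fin k, ∀ b ∈ ((c i).relabel f).labels, f a ≤ b) ↔
          (∀ i : Fin k, ∀ b ∈ (c i).labels, a ≤ b) := by
        simp only [labels_relabel, Multiset.mem_map]
        constructor
        · intro h i b hb
          exact (hf a ha b (hmem i b hb)).1 (h i (f b) ⟨b, hb, rfl⟩)
        · rintro h i b ⟨x, hx, rfl⟩
          exact (hf a ha x (hmem i x hx)).2 (h i x hx)
      simp only [hiff]
    · exact Finset.sum_congr rfl fun i _ =>
        ih i (fun x hx y hy => hf x (hmem i x hx) y (hmem i y hy))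

lemma relabel_relabel {k : ℕ} (f g : ℕ → ℕ) (T : KT k) :
    (T.relabel f).relabel g = T.relabel (g ∘ f) := by
  induction T with
  | nil => rfl
  | node a c ih => simp only [KT.relabel, ih]; rfl

lemma relabel_congr {k : ℕ} {f g : ℕ → ℕ} {T : KT k} (h : ∀ x ∈ T.labels, f x = g x) :
    T.relabel f = T.relabel g := by
  induction T with
  | nil => rfl
  | node a c ih =>
    have hmem : ∀ i : Fin k, ∀ b ∈ (c i).labels, b ∈ (KT.node a c).labels := by
      intro i b hb
      exact Multiset.mem_cons_of_mem (Multiset.mem_sum.2 ⟨i, Finset.mem_univ i, hb⟩)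
    simp only [KT.relabel]
    congr 1
    · exact h a (Multiset.mem_cons_self _ _)
    · funext i
      exact ih i (fun x hx => h x (hmem i x hx))

lemma relabel_id {k : ℕ} (T : KT k) : T.relabel id = T := by
  induction T with
  | nil => rfl
  | node a c ih => simp only [KT.relabel, ih]; rfl

lemma bval_card {k : ℕ} (t : ℚ) (u : Multiset ℕ) (hu : u.Nodup) :
    bval k t u = bval k t (Finset.Icc 1 (Multiset.card u)).val := by
  classical
  set n := Multiset.card u with hn
  set F := u.toFinset with hF
  have hFcard : F.card = n := Multiset.toFinset_card_of_nodup hu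
  set e := F.orderIsoOfFin hFcard with he
  set f : ℕ → ℕ := fun i => if h : i - 1 < n then (e ⟨i - 1, h⟩ : ℕ) else i with hfdef
  set g : ℕ → ℕ := fun x => if h : x ∈ F then ((e.symm ⟨x, h⟩ : Fin n) : ℕ) + 1 else x with hgdef
  have hlt : ∀ i ∈ Finset.Icc 1 n, i - 1 < n := by
    intro i hi; rw [Finset.mem_Icc] at hi; omega
  have hfval : ∀ (i : ℕ) (h : i - 1 < n), f i = (e ⟨i - 1, h⟩ : ℕ) := by
    intro i h; rw [hfdef]; exact dif_pos h
  have hgval : ∀ (x : ℕ) (h : x ∈ F), g x = ((e.symm ⟨x, h⟩ : Fin n) : ℕ) + 1 := by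
    intro x h; rw [hgdef]; exact dif_pos h
  have hfF : ∀ i ∈ Finset.Icc 1 n, f i ∈ F := by
    intro i hi; rw [hfval i (hlt i hi)]; exact (e ⟨i - 1, hlt i hi⟩).2
  have hfmem : ∀ i ∈ Finset.Icc 1 n, f i ∈ u := fun i hi => Multiset.mem_toFinset.1 (hfF i hi)
  have hgf : ∀ i ∈ Finset.Icc 1 n, g (f i) = i := by
    intro i hi
    have h1 := hlt i hi
    have h2 : f i ∈ F := hfF i hi
    rw [hgval _ h2]
    have h3 : (⟨f i, h2⟩ : {x // x ∈ F}) = e ⟨i - 1, h1⟩ := Subtype.ext (hfval i h1)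
    rw [h3, OrderIso.symm_apply_apply]
    rw [Finset.mem_Icc] at hi
    simp only []
    omega
  have hfg : ∀ x ∈ u, f (g x) = x := by
    intro x hx
    have h2 : x ∈ F := Multiset.mem_toFinset.2 hx
    rw [hgval _ h2]
    have h4 : ((e.symm ⟨x, h2⟩ : Fin n) : ℕ) + 1 - 1 < n := by
      simp only [Nat.add_sub_cancel]
      exact (e.symm ⟨x, h2⟩).isLt
    rw [hfval _ h4]
    have h5 : (⟨((e.symm ⟨x, h2⟩ : Fin n) : ℕ) + 1 - 1, h4⟩ : Fin n) = e.symm ⟨x, h2⟩ := by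
      apply Fin.ext
      simp
    rw [h5, OrderIso.apply_symm_apply]
  have hfle : ∀ i ∈ Finset.Icc 1 n, ∀ j ∈ Finset.Icc 1 n, (f i ≤ f j ↔ i ≤ j) := by
    intro i hi j hj
    rw [hfval i (hlt i hi), hfval j (hlt j hj)]
    rw [Subtype.coe_le_coe, OrderIso.le_iff_le, Fin.mk_le_mk]
    rw [Finset.mem_Icc] at hi hj
    omega
  have hgle : ∀ x ∈ u, ∀ y ∈ u, (g x ≤ g y ↔ x ≤ y) := by
    intro x hx y hy
    have h2 : x ∈ F := Multiset.mem_toFinset.2 hx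
    have h3 : y ∈ F := Multiset.mem_toFinset.2 hy
    rw [hgval _ h2, hgval _ h3, Nat.add_le_add_iff_right, ← Fin.le_def, OrderIso.le_iff_le,
      Subtype.mk_le_mk]
  have hmap : (Finset.Icc 1 n).val.map f = u := by
    have hnd : ((Finset.Icc 1 n).val.map f).Nodup := by
      apply Multiset.Nodup.map_on _ (Finset.Icc 1 n).nodup
      intro x hx y hy hxy
      have := hgf x hx
      rw [hxy, hgf y hy] at this
      exact this.symm
    have hsub : (Finset.Icc 1 n).val.map f ⊆ u := by
      intro x hx
      obtain ⟨i, hi, rfl⟩ := Multiset.mem_map.1 hx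
      exact hfmem i hi
    have hle : (Finset.Icc 1 n).val.map f ≤ u := (Multiset.le_iff_subset hnd).2 hsub
    apply Multiset.eq_of_le_of_card_le hle
    rw [Multiset.card_map, ← Finset.card_def, Nat.card_Icc]
    omega
  have hmap2 : u.map g = (Finset.Icc 1 n).val := by
    conv_lhs => rw [← hmap]
    rw [Multiset.map_map]
    have : ((Finset.Icc 1 n).val.map (g ∘ f)) = (Finset.Icc 1 n).val.map id := by
      apply Multiset.map_congr rfl
      intro x hx
      exact hgf x hx
    rw [this, Multiset.map_id]
  rw [bval, bval]
  refine Finset.sum_nbij' (KT.relabel g) (KT.relabel f) ?_ ?_ ?_ ?_ ?_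
  · intro T hT
    rw [mem_treeSet] at hT ⊢
    rw [labels_relabel, hT, hmap2]
  · intro T hT
    rw [mem_treeSet] at hT ⊢
    rw [labels_relabel, hT, hmap]
  · intro T hT
    rw [mem_treeSet] at hT
    rw [relabel_relabel]
    have : T.relabel (f ∘ g) = T.relabel id := by
      apply relabel_congr
      intro x hx
      rw [hT] at hx
      exact hfg x hx
    rw [this, relabel_id]
  · intro T hT
    rw [mem_treeSet] at hT
    rw [relabel_relabel]
    have : T.relabel (g ∘ f) = T.relabel id := by
      apply relabel_congr
      intro x hx
      rw [hT] at hx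
      exact hgf x hx
    rw [this, relabel_id]
  · intro T hT
    rw [mem_treeSet] at hT
    rw [pv_relabel g T (fun x hx y hy => hgle x (hT ▸ hx) y (hT ▸ hy))]

def KT.rootLabel {k : ℕ} : KT k → ℕ
  | .nil => 0
  | .node a _ => a

def KT.child {k : ℕ} : KT k → (Fin k → KT k)
  | .nil => fun _ => .nil
  | .node _ c => c

lemma bval_decomp {k : ℕ} (t : ℚ) (s : Multiset ℕ) (hs : s ≠ 0) :
    bval k t s = ∑ a ∈ s.toFinset, (if ∀ x ∈ s.erase a, a ≤ x then t else 1) *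
      ∑ p ∈ splits k (s.erase a), ∏ i, bval k t (p i) := by
  classical
  have step1 : bval k t s =
      ∑ x ∈ (s.toFinset.sigma fun a => (splits k (s.erase a)).sigma
          fun p => Fintype.piFinset fun i => treeSet k (p i)),
        (if ∀ y ∈ s.erase x.1, x.1 ≤ y then t else 1) * ∏ i, t ^ ((x.2.2 i).pv) := by
    rw [bval]
    refine Finset.sum_nbij'
      (fun T => ⟨T.rootLabel, ⟨fun i => (T.child i).labels, T.child⟩⟩)
      (fun x => KT.node x.1 x.2.2) ?_ ?_ ?_ ?_ ?_
    · intro T hT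
      rw [mem_treeSet] at hT
      cases T with
      | nil => exact absurd hT.symm hs
      | node a c =>
        simp only [KT.rootLabel, KT.child]
        rw [Finset.mem_sigma]
        refine ⟨?_, ?_⟩
        · rw [Multiset.mem_toFinset, ← hT]
          exact Multiset.mem_cons_self _ _
        · rw [Finset.mem_sigma]
          refine ⟨?_, ?_⟩
          · apply mem_splits.2
            rw [← hT]
            simp only [KT.labels]
            rw [Multiset.erase_cons_head]
          · exact Fintype.mem_piFinset.2 fun i => mem_treeSet.2 rfl
    · intro x hx
      obtain ⟨a, p, c⟩ := x
      rw [Finset.mem_sigma] at hx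
      obtain ⟨hx1, hx2⟩ := hx
      rw [Finset.mem_sigma] at hx2
      obtain ⟨hp, hc⟩ := hx2
      rw [mem_treeSet]
      have hlab : ∀ i, (c i).labels = p i := fun i =>
        mem_treeSet.1 (Fintype.mem_piFinset.1 hc i)
      show (KT.node a c).labels = s
      simp only [KT.labels]
      rw [Finset.sum_congr rfl fun i _ => hlab i, mem_splits.1 hp,
        Multiset.cons_erase (Multiset.mem_toFinset.1 hx1)]
    · intro T hT
      rw [mem_treeSet] at hT
      cases T with
      | nil => exact absurd hT.symm hs
      | node a c => rfl
    · intro x hx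
      obtain ⟨a, p, c⟩ := x
      rw [Finset.mem_sigma] at hx
      obtain ⟨hx1, hx2⟩ := hx
      rw [Finset.mem_sigma] at hx2
      obtain ⟨hp, hc⟩ := hx2
      have hlab : ∀ i, (c i).labels = p i := fun i =>
        mem_treeSet.1 (Fintype.mem_piFinset.1 hc i)
      show (⟨a, ⟨fun i => (c i).labels, c⟩⟩ :
        (a : ℕ) × (_ : Fin k → Multiset ℕ) × (Fin k → KT k)) = ⟨a, ⟨p, c⟩⟩
      have : (fun i => (c i).labels) = p := funext hlab
      rw [this]
    · intro T hT
      rw [mem_treeSet] at hT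
      cases T with
      | nil => exact absurd hT.symm hs
      | node a c =>
        have hM : ∑ i, (c i).labels = s.erase a := by
          rw [← hT]
          simp only [KT.labels]
          rw [Multiset.erase_cons_head]
        have hcond : (∀ i : Fin k, ∀ b ∈ (c i).labels, a ≤ b) ↔
            (∀ y ∈ s.erase a, a ≤ y) := by
          rw [← hM]
          constructor
          · intro h y hy
            obtain ⟨i, _, hyi⟩ := Multiset.mem_sum.1 hy
            exact h i y hyi
          · intro h i b hb
            exact h b (Multiset.mem_sum.2 ⟨i, Finset.mem_univ i, hb⟩)
        show t ^ (KT.node a c).pv = _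
        simp only [KT.pv, KT.rootLabel, KT.child]
        rw [pow_add, Finset.prod_pow_eq_pow_sum]
        congr 1
        rw [if_congr hcond rfl rfl]
        split_ifs with h <;> [exact (pow_one t).trans (if_pos h).symm; exact (pow_zero t).trans (if_neg h).symm]
  rw [step1, Finset.sum_sigma]
  apply Finset.sum_congr rfl
  intro a ha
  rw [Finset.sum_sigma, Finset.mul_sum]
  apply Finset.sum_congr rfl
  intro p hp
  show ∑ c ∈ Fintype.piFinset fun i => treeSet k (p i),
      (if ∀ y ∈ s.erase a, a ≤ y then t else 1) * ∏ i, t ^ ((c i).pv) = _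
  rw [← Finset.mul_sum]
  congr 1
  simp only [bval]
  exact (Finset.prod_univ_sum (fun i => treeSet k (p i)) (fun _ T => t ^ T.pv)).symm

lemma splits_sum_pow (c : ℕ → ℚ) : ∀ (j : ℕ) (u : Multiset ℕ), u.Nodup →
    ∑ p ∈ splits j u, ∏ i, c (Multiset.card (p i)) =
      (Nat.factorial (Multiset.card u) : ℚ) *
        PowerSeries.coeff (Multiset.card u)
          ((PowerSeries.mk fun n => c n / n.factorial) ^ j) := by
  intro j
  induction j with
  | zero =>
    intro u hu
    by_cases hu0 : u = 0
    · subst hu0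
      have h1 : splits 0 (0 : Multiset ℕ) = {fun i : Fin 0 => i.elim0} := by
        ext p
        rw [mem_splits, Finset.mem_singleton]
        constructor
        · intro _
          funext i
          exact i.elim0
        · intro _
          simp
      rw [h1, Finset.sum_singleton]
      simp
    · have h1 : splits 0 u = ∅ := by
        ext p
        rw [mem_splits]
        simp only [Finset.notMem_empty, iff_false]
        intro h
        apply hu0
        rw [← h]
        simp
      have h2 : Multiset.card u ≠ 0 := fun h => hu0 (Multiset.card_eq_zero.1 h)
      rw [h1, Finset.sum_empty, pow_zero, PowerSeries.coeff_one, if_neg h2]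
      simp
  | succ j ih =>
    intro u hu
    set n := Multiset.card u with hn
    have step1 : ∑ p ∈ splits (j + 1) u, ∏ i, c (Multiset.card (p i)) =
        ∑ x ∈ (u.powerset.toFinset.sigma fun X => splits j (u - X)),
          c (Multiset.card x.1) * ∏ i, c (Multiset.card (x.2 i)) := by
      refine Finset.sum_nbij' (fun p => ⟨p 0, fun i => p i.succ⟩)
        (fun x => Fin.cons x.1 x.2) ?_ ?_ ?_ ?_ ?_
      · intro p hp
        rw [Finset.mem_sigma]
        constructor
        · rw [Multiset.mem_toFinset, Multiset.mem_powerset]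
          exact le_of_mem_splits hp 0
        · rw [mem_splits]
          have h1 := mem_splits.1 hp
          rw [Fin.sum_univ_succ] at h1
          have h2 : (∑ i : Fin j, p i.succ) + p 0 = u := by rw [add_comm]; exact h1
          exact eq_tsub_of_add_eq h2
      · intro x hx
        rw [Finset.mem_sigma] at hx
        rw [mem_splits, Fin.sum_univ_succ]
        simp only [Fin.cons_zero, Fin.cons_succ]
        rw [mem_splits.1 hx.2]
        exact add_tsub_cancel_of_le (Multiset.mem_powerset.1 (Multiset.mem_toFinset.1 hx.1))
      · intro p _
        exact Fin.cons_self_tail p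
      · intro x _
        obtain ⟨X, q⟩ := x
        simp only [Fin.cons_zero, Fin.cons_succ]
      · intro p _
        exact Fin.prod_univ_succ _
    rw [step1, Finset.sum_sigma]
    have step2 : ∀ X ∈ u.powerset.toFinset,
        ∑ q ∈ splits j (u - X), c (Multiset.card X) * ∏ i, c (Multiset.card (q i)) =
        c (Multiset.card X) * ((Nat.factorial (n - Multiset.card X) : ℚ) *
          PowerSeries.coeff (n - Multiset.card X)
            ((PowerSeries.mk fun m => c m / m.factorial) ^ j)) := by
      intro X hX
      have hXle : X ≤ u := Multiset.mem_powerset.1 (Multiset.mem_toFinset.1 hX)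
      rw [← Finset.mul_sum, ih (u - X) (Multiset.nodup_of_le (Multiset.sub_le_self u X) hu),
        Multiset.card_sub hXle]
    rw [Finset.sum_congr rfl step2]
    have hmaps : ∀ X ∈ u.powerset.toFinset, Multiset.card X ∈ Finset.range (n + 1) := by
      intro X hX
      rw [Finset.mem_range, Nat.lt_succ_iff, hn]
      exact Multiset.card_le_card (Multiset.mem_powerset.1 (Multiset.mem_toFinset.1 hX))
    rw [← Finset.sum_fiberwise_of_maps_to hmaps
      (fun X => c (Multiset.card X) * ((Nat.factorial (n - Multiset.card X) : ℚ) *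
        PowerSeries.coeff (n - Multiset.card X)
          ((PowerSeries.mk fun m => c m / m.factorial) ^ j)))]
    have step3 : ∀ m ∈ Finset.range (n + 1),
        (∑ X ∈ u.powerset.toFinset with Multiset.card X = m,
          c (Multiset.card X) * ((Nat.factorial (n - Multiset.card X) : ℚ) *
            PowerSeries.coeff (n - Multiset.card X)
              ((PowerSeries.mk fun m => c m / m.factorial) ^ j))) =
        (n.choose m : ℚ) * (c m * ((Nat.factorial (n - m) : ℚ) *
            PowerSeries.coeff (n - m)
              ((PowerSeries.mk fun m => c m / m.factorial) ^ j))) := by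
      intro m _
      have hfilter : (u.powerset.toFinset.filter fun X => Multiset.card X = m) =
          (u.powersetCard m).toFinset := by
        ext X
        rw [Finset.mem_filter, Multiset.mem_toFinset, Multiset.mem_toFinset,
          Multiset.mem_powersetCard, Multiset.mem_powerset]
      have hcard : (u.powerset.toFinset.filter fun X => Multiset.card X = m).card =
          n.choose m := by
        rw [hfilter, Multiset.toFinset_card_of_nodup hu.powersetCard,
          Multiset.card_powersetCard]
      rw [Finset.sum_congr rfl (fun X hX => by
        rw [(Finset.mem_filter.1 hX).2]), Finset.sum_const, hcard, nsmul_eq_mul]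
    rw [Finset.sum_congr rfl step3]
    rw [pow_succ', PowerSeries.coeff_mul, Finset.Nat.sum_antidiagonal_eq_sum_range_succ_mk,
      Finset.mul_sum]
    apply Finset.sum_congr rfl
    intro m hm
    have hm' : m ≤ n := Nat.lt_succ_iff.1 (Finset.mem_range.1 hm)
    rw [PowerSeries.coeff_mk]
    have key : (n.choose m : ℚ) * m.factorial * (n - m).factorial = n.factorial := by
      exact_mod_cast congrArg (Nat.cast (R := ℚ)) (Nat.choose_mul_factorial_mul_factorial hm')
    have hm0 : (m.factorial : ℚ) ≠ 0 := Nat.cast_ne_zero.2 m.factorial_ne_zero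
    field_simp
    rw [← key]
    ring

/-- `a_n(t) = Σ_{T ∈ 𝒜ᵏ_n} t^{pv(T)}` (so `a_0(t) = 1`). -/
noncomputable def aPoly (k n : ℕ) (t : ℚ) : ℚ := ∑ᶠ T : KTn k n, t ^ T.1.pv

noncomputable instance instFintypeKTn (k n : ℕ) : Fintype (KTn k n) :=
  Fintype.subtype (treeSet k (Finset.Icc 1 n).val) fun _ => mem_treeSet

lemma aPoly_eq (k n : ℕ) (t : ℚ) : aPoly k n t = bval k t (Finset.Icc 1 n).val := by
  rw [aPoly, finsum_eq_sum_of_fintype, bval]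
  exact (Finset.sum_subtype _ (fun _ => mem_treeSet) fun T => t ^ T.pv).symm

lemma labels_eq_zero_iff {k : ℕ} {T : KT k} : T.labels = 0 ↔ T = KT.nil := by
  cases T with
  | nil => simp [KT.labels]
  | node a c =>
    simp only [KT.labels]
    constructor
    · intro h
      exact absurd h (Multiset.cons_ne_zero)
    · intro h
      exact absurd h (by intro h'; cases h')

lemma aPoly_zero (k : ℕ) (t : ℚ) : aPoly k 0 t = 1 := by
  rw [aPoly_eq]
  have h0 : (Finset.Icc 1 0 : Finset ℕ).val = 0 := rfl
  rw [h0, bval]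
  have h1 : treeSet k 0 = {KT.nil} := by
    ext T
    rw [mem_treeSet, Finset.mem_singleton, labels_eq_zero_iff]
  rw [h1, Finset.sum_singleton]
  simp [KT.pv]

lemma main_rec (k n : ℕ) (t : ℚ) :
    aPoly k (n + 1) t = (t + n) * ((Nat.factorial n : ℚ) *
      PowerSeries.coeff n ((PowerSeries.mk fun m => aPoly k m t / m.factorial) ^ k)) := by
  classical
  set s : Multiset ℕ := (Finset.Icc 1 (n + 1)).val with hsdef
  have hsn : s.Nodup := (Finset.Icc 1 (n + 1)).nodup
  have hcard : Multiset.card s = n + 1 := by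
    rw [hsdef, ← Finset.card_def, Nat.card_Icc]
    omega
  have hs0 : s ≠ 0 := by
    intro h
    rw [h] at hcard
    simp at hcard
  have h1s : (1 : ℕ) ∈ s := by
    rw [hsdef]
    exact (Finset.mem_Icc (a := 1) (b := n + 1)).2 (by omega)
  set K : ℚ := (Nat.factorial n : ℚ) *
    PowerSeries.coeff n ((PowerSeries.mk fun m => aPoly k m t / m.factorial) ^ k) with hK
  rw [aPoly_eq, bval_decomp t s hs0]
  have hinner : ∀ a ∈ s.toFinset,
      (∑ p ∈ splits k (s.erase a), ∏ i, bval k t (p i)) = K := by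
    intro a ha
    have haS : a ∈ s := Multiset.mem_toFinset.1 ha
    have hnd : (s.erase a).Nodup := Multiset.nodup_of_le (Multiset.erase_le a s) hsn
    have hcd : Multiset.card (s.erase a) = n := by
      rw [Multiset.card_erase_of_mem haS, hcard]
      rfl
    have hstep : ∀ p ∈ splits k (s.erase a),
        (∏ i, bval k t (p i)) = ∏ i, aPoly k (Multiset.card (p i)) t := by
      intro p hp
      apply Finset.prod_congr rfl
      intro i _
      have hple : p i ≤ s.erase a := le_of_mem_splits hp i
      have hpnd : (p i).Nodup := Multiset.nodup_of_le hple hnd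
      rw [bval_card t (p i) hpnd, aPoly_eq]
    rw [Finset.sum_congr rfl hstep,
      splits_sum_pow (fun m => aPoly k m t) k (s.erase a) hnd, hcd, hK]
  rw [Finset.sum_congr rfl fun a ha => by rw [hinner a ha]]
  have htf : s.toFinset = Finset.Icc 1 (n + 1) := by
    rw [hsdef, Finset.val_toFinset]
  rw [htf]
  have h1mem : (1 : ℕ) ∈ Finset.Icc 1 (n + 1) := Finset.mem_Icc.2 (by omega)
  rw [← Finset.add_sum_erase _ _ h1mem]
  have hw1 : (if ∀ x ∈ s.erase 1, (1 : ℕ) ≤ x then t else 1) = t := by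
    apply if_pos
    intro x hx
    have : x ∈ s := Multiset.mem_of_mem_erase hx
    rw [hsdef] at this
    exact (Finset.mem_Icc.1 this).1
  have hwa : ∀ a ∈ (Finset.Icc 1 (n + 1)).erase 1,
      (if ∀ x ∈ s.erase a, a ≤ x then t else 1) * K = K := by
    intro a ha
    rw [Finset.mem_erase] at ha
    have ha2 : 2 ≤ a := by
      have := Finset.mem_Icc.1 ha.2
      omega
    rw [if_neg, one_mul]
    intro h
    have h1e : (1 : ℕ) ∈ s.erase a := by
      rw [Multiset.mem_erase_of_ne (by omega : (1 : ℕ) ≠ a)]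
      exact h1s
    have := h 1 h1e
    omega
  rw [Finset.sum_congr rfl hwa, Finset.sum_const, hw1]
  rw [Finset.card_erase_of_mem h1mem, Nat.card_Icc]
  have : n + 1 + 1 - 1 - 1 = n := by omega
  rw [this, nsmul_eq_mul]
  ring

lemma psDerivPow (A : PowerSeries ℚ) (m : ℕ) :
    PowerSeries.derivative ℚ (A ^ (m + 1)) =
      PowerSeries.C ((m + 1 : ℕ) : ℚ) * A ^ m * PowerSeries.derivative ℚ A := by
  rw [Derivation.leibniz_pow]
  rw [smul_eq_mul, nsmul_eq_mul]
  have : ((m + 1 : ℕ) : PowerSeries ℚ) = PowerSeries.C ((m + 1 : ℕ) : ℚ) := by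
    rw [map_natCast (PowerSeries.C (R := ℚ))]
  rw [this]
  have h2 : m + 1 - 1 = m := by omega
  rw [h2]
  ring

/-- For `k ≥ 2`, the exponential generating function `A(x) = Σ_{n≥0} a_n(t) xⁿ/n!` of
the proper-vertex enumerator of `k`-ary trees satisfies the differential equation
`A' = k·x·A^(k−1)·A' + t·A^k` with `A(0) = 1`. -/
theorem kary_ODE (k : ℕ) (hk : 2 ≤ k) (t : ℚ) :
    PowerSeries.constantCoeff (PowerSeries.mk fun n => aPoly k n t / n.factorial) = 1 ∧
      PowerSeries.derivative ℚ (PowerSeries.mk fun n => aPoly k n t / n.factorial) =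
        PowerSeries.C (k : ℚ) * PowerSeries.X *
              (PowerSeries.mk fun n => aPoly k n t / n.factorial) ^ (k - 1) *
              PowerSeries.derivative ℚ (PowerSeries.mk fun n => aPoly k n t / n.factorial) +
          PowerSeries.C t * (PowerSeries.mk fun n => aPoly k n t / n.factorial) ^ k := by
  set A : PowerSeries ℚ := PowerSeries.mk fun n => aPoly k n t / n.factorial with hA
  constructor
  · rw [hA, PowerSeries.constantCoeff_mk, aPoly_zero]
    simp
  · have hk1 : k - 1 + 1 = k := by omega
    have hDpow : PowerSeries.derivative ℚ (A ^ k) =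
        PowerSeries.C ((k : ℕ) : ℚ) * A ^ (k - 1) * PowerSeries.derivative ℚ A := by
      have := psDerivPow A (k - 1)
      rw [hk1] at this
      exact this
    have hrw : PowerSeries.C (k : ℚ) * PowerSeries.X * A ^ (k - 1) *
        PowerSeries.derivative ℚ A =
        PowerSeries.X * PowerSeries.derivative ℚ (A ^ k) := by
      rw [hDpow]
      ring
    rw [hrw]
    ext m
    rw [PowerSeries.coeff_derivative, map_add, PowerSeries.coeff_C_mul]
    have hcoeffA : ∀ n : ℕ, PowerSeries.coeff n A = aPoly k n t / n.factorial := by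
      intro n
      rw [hA, PowerSeries.coeff_mk]
    rw [hcoeffA, main_rec]
    cases m with
    | zero =>
      rw [PowerSeries.coeff_zero_X_mul]
      simp only [Nat.cast_zero, add_zero, Nat.factorial_zero, Nat.cast_one, one_mul,
        Nat.factorial_one, zero_add]
      ring
    | succ m' =>
      rw [PowerSeries.coeff_succ_X_mul, PowerSeries.coeff_derivative]
      have hne : ((m' + 1 + 1).factorial : ℚ) ≠ 0 := Nat.cast_ne_zero.2 (Nat.factorial_ne_zero _)
      have hfact : ((m' + 1 + 1).factorial : ℚ) = (m' + 1 + 1) * (m' + 1).factorial := by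
        rw [Nat.factorial_succ]
        push_cast
        ring
      rw [hfact]
      have hne2 : ((m' + 1).factorial : ℚ) ≠ 0 := Nat.cast_ne_zero.2 (Nat.factorial_ne_zero _)
      field_simp
      push_cast
      ring
end

section
/- For every n ≥ 1, Σ_{T ∈ ℬ_n} 2^{pv(T)} = 2^n · (n+1)^{n−1}; equivalently, the evaluation at t = 2 of the polynomial t·Π_{i=1}^{n−1}((i+1)t + 2(n−i)) equals 2^n·(n+1)^{n−1}, where ℬ_n is the set of binary trees on [n]. -/
section AbelPart

open Polynomial Finset

noncomputable def Pa : ℕ → Polynomial ℚ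
  | 0 => 1
  | n+1 => X * (X + C ((n:ℚ)+1))^n

lemma Pa_deriv (n : ℕ) : derivative (Pa (n+1)) = ((n:ℚ)+1) • ((Pa n).comp (X + 1)) := by
  cases n with
  | zero => simp [Pa]
  | succ m =>
    simp only [Pa]
    rw [derivative_mul, derivative_pow]
    simp only [derivative_X, derivative_add, derivative_C, add_zero, comp_assoc,
      mul_comp, X_comp, pow_comp, add_comp, C_comp, one_mul, smul_eq_C_mul, C_add, C_1, one_comp, derivative_one]
    push_cast
    simp only [C_add, C_1]
    ring

lemma poly_ext {p q : ℚ[X]} (hd : derivative p = derivative q)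
    (h0 : p.eval 0 = q.eval 0) : p = q := by
  have h1 : derivative (p - q) = 0 := by rw [derivative_sub, hd, sub_self]
  have h2 := eq_C_of_derivative_eq_zero h1
  rw [sub_eq_iff_eq_add] at h2
  rw [h2, coeff_sub, coeff_zero_eq_eval_zero, coeff_zero_eq_eval_zero, h0, sub_self,
    map_zero, zero_add]

lemma Pa_eval_zero (n : ℕ) : (Pa n).eval 0 = if n = 0 then 1 else 0 := by
  cases n <;> simp [Pa]

lemma Pa_abel (n : ℕ) (y : ℚ) :
    ∑ k ∈ Finset.range (n+1), (n.choose k : ℚ) • (Pa k * C ((Pa (n-k)).eval y)) =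
      (Pa n).comp (X + C y) := by
  induction n generalizing y with
  | zero => simp [Pa]
  | succ n ih =>
    apply poly_ext
    · rw [derivative_sum]
      rw [Finset.sum_range_succ']
      have hz : derivative (((n+1).choose 0 : ℚ) • (Pa 0 * C ((Pa (n+1-0)).eval y))) = 0 := by
        rw [show Pa 0 = 1 from rfl, one_mul, derivative_smul, derivative_C, smul_zero]
      rw [hz, add_zero]
      have key : ∀ i ∈ Finset.range (n+1),
          derivative (((n+1).choose (i+1) : ℚ) • (Pa (i+1) * C ((Pa (n+1-(i+1))).eval y))) =
          ((n:ℚ)+1) • ((n.choose i : ℚ) •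
            ((Pa i).comp (X+1) * C ((Pa (n-i)).eval y))) := by
        intro i _
        rw [derivative_smul, derivative_mul, derivative_C, mul_zero, add_zero,
          Pa_deriv, Nat.succ_sub_succ, smul_mul_assoc, smul_smul, smul_smul]
        congr 1
        have hnc : (n+1).choose (i+1) * (i+1) = (n+1) * n.choose i :=
          (Nat.add_one_mul_choose_eq n i).symm
        have : (((n+1).choose (i+1) * (i+1) : ℕ) : ℚ) = (((n+1) * n.choose i : ℕ) : ℚ) := by
          rw [hnc]
        push_cast at this
        linarith
      rw [Finset.sum_congr rfl key, ← Finset.smul_sum]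
      have : (∑ i ∈ Finset.range (n+1), (n.choose i : ℚ) •
            ((Pa i).comp (X+1) * C ((Pa (n-i)).eval y))) =
          ((Pa n).comp (X + C y)).comp (X + 1) := by
        rw [← ih y]
        simp [Finset.sum_comp, smul_comp, mul_comp, C_comp]
      rw [this, comp_assoc]
      rw [Polynomial.derivative_comp, Pa_deriv]
      simp only [derivative_add, derivative_X, derivative_C, add_zero, one_mul,
        smul_comp, comp_assoc]
      congr 2
      simp only [add_comp, X_comp, C_comp, one_comp]
      ring
    · rw [eval_comp]
      simp only [eval_finset_sum, eval_smul, eval_mul, eval_C, eval_add, eval_X, zero_add,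
        smul_eq_mul]
      rw [Finset.sum_range_succ']
      have : ∀ i ∈ Finset.range (n+1),
          ((n+1).choose (i+1) : ℚ) * ((Pa (i+1)).eval 0 * (Pa (n+1-(i+1))).eval y) = 0 := by
        intro i _
        rw [Pa_eval_zero]
        simp
      rw [Finset.sum_congr rfl this]
      simp [Pa_eval_zero]

noncomputable def Fq : ℕ → ℚ := fun m => 2^m * ((m:ℚ)+1)^(m-1)

lemma Fq_zero : Fq 0 = 1 := by simp [Fq]

lemma Pa_eval_one (k : ℕ) : (Pa k).eval 1 = ((k:ℚ)+1)^(k-1) := by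
  cases k with
  | zero => simp [Pa]
  | succ m => simp [Pa]; push_cast; ring_nf

lemma Pa_eval_two (q : ℕ) (hq : 1 ≤ q) : (Pa q).eval 2 = 2 * ((q:ℚ)+2)^(q-1) := by
  cases q with
  | zero => omega
  | succ m => simp [Pa]; push_cast; ring_nf

lemma abel_num (n : ℕ) :
    ∑ k ∈ Finset.range (n+1), (n.choose k : ℚ) * (((k:ℚ)+1)^(k-1) * ((n-k:ℕ)+1:ℚ)^(n-k-1)) =
      (Pa n).eval 2 := by
  have h := congrArg (Polynomial.eval 1) (Pa_abel n 1)
  simp only [eval_finset_sum, eval_smul, eval_mul, eval_C, eval_comp, eval_add, eval_X,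
    eval_one, smul_eq_mul, Pa_eval_one] at h
  norm_num at h
  convert h using 2

lemma Fq_rec (q : ℕ) :
    Fq (q+1) = ((q:ℚ)+2) * ∑ k ∈ Finset.range (q+1), (q.choose k : ℚ) * Fq k * Fq (q-k) := by
  have hsum : ∑ k ∈ Finset.range (q+1), (q.choose k : ℚ) * Fq k * Fq (q-k)
      = 2^q * ((Pa q).eval 2) := by
    rw [← abel_num, Finset.mul_sum]
    apply Finset.sum_congr rfl
    intro k hk
    have hk' : k ≤ q := by simpa using Nat.lt_succ_iff.mp (Finset.mem_range.mp hk)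
    simp only [Fq]
    have h2 : (2:ℚ)^k * 2^(q-k) = 2^q := by
      rw [← pow_add]; congr 1; omega
    push_cast
    rw [show (2:ℚ)^q = 2^k * 2^(q-k) from h2.symm]
    ring
  rw [hsum]
  cases q with
  | zero => norm_num [Fq, Pa]
  | succ m =>
    rw [Pa_eval_two _ (by omega)]
    simp only [Fq]
    push_cast
    rw [pow_succ ((m:ℚ)+1+1+1) m, pow_succ (2:ℚ) (m+1)]
    ring_nf


end AbelPart

-- basic lemmas
lemma KT.labels_node (a : ℕ) (c : Fin 2 → KT 2) :
    (KT.node a c).labels = a ::ₘ ((c 0).labels + (c 1).labels) := by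
  simp [KT.labels, Fin.sum_univ_two]

lemma KT.pv_node (a : ℕ) (c : Fin 2 → KT 2) :
    (KT.node a c).pv =
      (if ∀ i : Fin 2, ∀ b ∈ (c i).labels, a ≤ b then 1 else 0) + ((c 0).pv + (c 1).pv) := by
  simp [KT.pv, Fin.sum_univ_two]

lemma KT.labels_eq_zero {T : KT 2} : T.labels = 0 ↔ T = KT.nil := by
  cases T with
  | nil => simp [KT.labels]
  | node a c => simp [KT.labels]

lemma vec_eta (c : Fin 2 → KT 2) : ![c 0, c 1] = c := by
  funext i
  fin_cases i <;> simp

open scoped Classical in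
noncomputable def trees : ℕ → Finset ℕ → Finset (KT 2)
  | 0, s => if s = ∅ then {KT.nil} else ∅
  | n+1, s =>
    if s = ∅ then {KT.nil} else
      s.biUnion fun a =>
        (s.erase a).powerset.biUnion fun u =>
          ((trees n u) ×ˢ (trees n ((s.erase a) \ u))).image
            fun p => KT.node a ![p.1, p.2]

lemma mem_trees : ∀ {n : ℕ} {s : Finset ℕ}, s.card ≤ n →
    ∀ {T : KT 2}, (T ∈ trees n s ↔ T.labels = s.val) := by
  intro n
  induction n with
  | zero =>
    intro s hs T
    have : s = ∅ := Finset.card_eq_zero.mp (Nat.le_zero.mp hs)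
    subst this
    simp [trees, KT.labels_eq_zero]
  | succ n ih =>
    intro s hs T
    by_cases hempty : s = ∅
    · subst hempty
      simp [trees, KT.labels_eq_zero]
    · rw [trees, if_neg hempty]
      constructor
      · intro hT
        simp only [Finset.mem_biUnion, Finset.mem_powerset, Finset.mem_image,
          Finset.mem_product] at hT
        obtain ⟨a, ha, u, hu, ⟨l, r⟩, ⟨hl, hr⟩, rfl⟩ := hT
        have herase : (s.erase a).card = s.card - 1 := Finset.card_erase_of_mem ha
        have hs1 : 1 ≤ s.card := Finset.card_pos.mpr (Finset.nonempty_iff_ne_empty.mpr hempty)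
        have hue : u.card ≤ n := by
          have := Finset.card_le_card hu
          omega
        have hre : ((s.erase a) \ u).card ≤ n := by
          have := Finset.card_le_card (Finset.sdiff_subset (s := s.erase a) (t := u))
          omega
        have hl' := (ih hue).mp hl
        have hr' := (ih hre).mp hr
        rw [KT.labels_node]
        simp only [Matrix.cons_val_zero, Matrix.cons_val_one, Matrix.head_cons]
        rw [hl', hr', Finset.sdiff_val,
          add_tsub_cancel_of_le (Finset.val_le_iff.mpr hu), Finset.erase_val,
          Multiset.cons_erase (Finset.mem_def.mp ha)]
      · intro hT
        cases T with
        | nil =>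
          simp only [KT.labels] at hT
          exact absurd (Finset.val_eq_zero.mp hT.symm) hempty
        | node a c =>
          rw [KT.labels_node] at hT
          have ha : a ∈ s := by
            rw [Finset.mem_def, ← hT]; exact Multiset.mem_cons_self _ _
          have hea : (s.erase a).val = (c 0).labels + (c 1).labels := by
            rw [Finset.erase_val, ← hT, Multiset.erase_cons_head]
          have h0le : (c 0).labels ≤ (s.erase a).val := by
            rw [hea]; exact Multiset.le_add_right _ _
          have h0nodup : (c 0).labels.Nodup := Multiset.nodup_of_le h0le (s.erase a).nodup
          set u : Finset ℕ := ⟨(c 0).labels, h0nodup⟩ with hu_def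
          have huval : u.val = (c 0).labels := rfl
          have hu : u ⊆ s.erase a := fun x hx =>
            Multiset.mem_of_le h0le (by exact hx)
          have herase : (s.erase a).card = s.card - 1 := Finset.card_erase_of_mem ha
          have hs1 : 1 ≤ s.card := Finset.card_pos.mpr (Finset.nonempty_iff_ne_empty.mpr hempty)
          have hucard : u.card ≤ n := by
            have h1 := Finset.card_le_card hu
            omega
          have hrval : (s.erase a \ u).val = (c 1).labels := by
            rw [Finset.sdiff_val, hea, huval, add_tsub_cancel_left]
          have hrcard : (s.erase a \ u).card ≤ n := by
            have h1 := Finset.card_le_card (Finset.sdiff_subset (s := s.erase a) (t := u))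
            omega
          simp only [Finset.mem_biUnion, Finset.mem_powerset, Finset.mem_image,
            Finset.mem_product]
          refine ⟨a, ha, u, hu, ⟨c 0, c 1⟩, ⟨?_, ?_⟩, ?_⟩
          · exact (ih hucard).mpr huval.symm
          · exact (ih hrcard).mpr hrval.symm
          · rw [vec_eta]

lemma pow_pv_node {a : ℕ} {l r : KT 2} {e : Multiset ℕ} (hle : l.labels + r.labels = e) :
    (2:ℚ)^(KT.node a ![l,r]).pv =
      (if ∀ b ∈ e, a ≤ b then 2 else 1) * ((2:ℚ)^l.pv * (2:ℚ)^r.pv) := by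
  rw [KT.pv_node]
  simp only [Matrix.cons_val_zero, Matrix.cons_val_one, Matrix.head_cons]
  have hc : (∀ i : Fin 2, ∀ b ∈ (![l,r] i).labels, a ≤ b) ↔ (∀ b ∈ e, a ≤ b) := by
    rw [Fin.forall_fin_two]
    simp only [Matrix.cons_val_zero, Matrix.cons_val_one, Matrix.head_cons, ← hle,
      Multiset.mem_add]
    constructor
    · rintro ⟨h0, h1⟩ b (hb | hb)
      exacts [h0 b hb, h1 b hb]
    · intro h
      exact ⟨fun b hb => h b (Or.inl hb), fun b hb => h b (Or.inr hb)⟩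
  rw [pow_add, pow_add, apply_ite ((2:ℚ) ^ ·), pow_one, pow_zero]
  simp only [hc]

open scoped Classical in
lemma sum_trees : ∀ {n : ℕ} {s : Finset ℕ}, s.card ≤ n →
    ∑ T ∈ trees n s, (2:ℚ)^T.pv = Fq s.card := by
  intro n
  induction n with
  | zero =>
    intro s hs
    have : s = ∅ := Finset.card_eq_zero.mp (Nat.le_zero.mp hs)
    subst this
    simp [trees, Fq_zero, KT.pv]
  | succ n ih =>
    intro s hs
    by_cases hempty : s = ∅
    · subst hempty
      simp [trees, Fq_zero, KT.pv]
    · have hs1 : 1 ≤ s.card := Finset.card_pos.mpr (Finset.nonempty_iff_ne_empty.mpr hempty)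
      set m := s.card with hm
      -- facts about cards
      have herase : ∀ a ∈ s, (s.erase a).card = m - 1 := fun a ha =>
        Finset.card_erase_of_mem ha
      have hucard : ∀ a ∈ s, ∀ u ∈ (s.erase a).powerset, u.card ≤ n := by
        intro a ha u hu
        have := Finset.card_le_card (Finset.mem_powerset.mp hu)
        have := herase a ha
        omega
      have hrcard : ∀ a ∈ s, ∀ u : Finset ℕ, ((s.erase a) \ u).card ≤ n := by
        intro a ha u
        have := Finset.card_le_card (Finset.sdiff_subset (s := s.erase a) (t := u))
        have := herase a ha
        omega
      -- labels of members
      have hlab : ∀ a ∈ s, ∀ u ∈ (s.erase a).powerset, ∀ l ∈ trees n u,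
          l.labels = u.val := by
        intro a ha u hu l hl
        exact (mem_trees (hucard a ha u hu)).mp hl
      have hlabr : ∀ a ∈ s, ∀ u : Finset ℕ, ∀ r ∈ trees n ((s.erase a) \ u),
          r.labels = ((s.erase a) \ u).val := by
        intro a ha u r hr
        exact (mem_trees (hrcard a ha u)).mp hr
      rw [trees, if_neg hempty]
      -- outer disjointness
      have houter : (↑s : Set ℕ).PairwiseDisjoint
          (fun a => (s.erase a).powerset.biUnion fun u =>
            ((trees n u) ×ˢ (trees n ((s.erase a) \ u))).image
              fun p => KT.node a ![p.1, p.2]) := by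
        intro a _ b _ hab
        simp only [Finset.disjoint_left, Finset.mem_biUnion, Finset.mem_image,
          Finset.mem_product]
        rintro T ⟨u, hu, ⟨l, r⟩, _, rfl⟩ ⟨u', hu', ⟨l', r'⟩, _, hT⟩
        exact hab (by injection hT.symm)
      rw [Finset.sum_biUnion houter]
      -- inner computation for fixed a
      have hinner : ∀ a ∈ s,
          (∑ T ∈ ((s.erase a).powerset.biUnion fun u =>
            ((trees n u) ×ˢ (trees n ((s.erase a) \ u))).image
              fun p => KT.node a ![p.1, p.2]), (2:ℚ)^T.pv) =
          (if ∀ b ∈ (s.erase a).val, a ≤ b then 2 else 1) *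
            ∑ k ∈ Finset.range m, ((m-1).choose k : ℚ) * (Fq k * Fq (m-1-k)) := by
        intro a ha
        have hdisj : (↑(s.erase a).powerset : Set (Finset ℕ)).PairwiseDisjoint
            (fun u => ((trees n u) ×ˢ (trees n ((s.erase a) \ u))).image
              fun p => KT.node a ![p.1, p.2]) := by
          intro u hu u' hu' huu'
          simp only [Finset.disjoint_left, Finset.mem_image, Finset.mem_product]
          rintro T ⟨⟨l, r⟩, ⟨hl, _⟩, rfl⟩ ⟨⟨l', r'⟩, ⟨hl', _⟩, hT⟩
          apply huu'
          have hvec : (![l', r'] : Fin 2 → KT 2) = ![l, r] := by injection hT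
          have hll : l' = l := congrFun hvec 0
          have h1 : l.labels = u.val :=
            hlab a ha u (Finset.mem_coe.mp hu) l hl
          have h2 : l'.labels = u'.val :=
            hlab a ha u' (Finset.mem_coe.mp hu') l' hl'
          apply Finset.val_inj.mp
          rw [← h1, ← h2, hll]
        rw [Finset.sum_biUnion hdisj]
        have hstep : ∀ u ∈ (s.erase a).powerset,
            (∑ T ∈ ((trees n u) ×ˢ (trees n ((s.erase a) \ u))).image
              (fun p => KT.node a ![p.1, p.2]), (2:ℚ)^T.pv) =
            (if ∀ b ∈ (s.erase a).val, a ≤ b then 2 else 1) *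
              (Fq u.card * Fq (m-1-u.card)) := by
          intro u hu
          rw [Finset.sum_image]
          · rw [Finset.sum_product]
            have hpt : ∀ l ∈ trees n u, ∀ r ∈ trees n ((s.erase a) \ u),
                (2:ℚ)^(KT.node a ![l, r]).pv =
                (if ∀ b ∈ (s.erase a).val, a ≤ b then 2 else 1) *
                  ((2:ℚ)^l.pv * (2:ℚ)^r.pv) := by
              intro l hl r hr
              apply pow_pv_node
              rw [hlab a ha u hu l hl, hlabr a ha u r hr, Finset.sdiff_val,
                add_tsub_cancel_of_le (Finset.val_le_iff.mpr (Finset.mem_powerset.mp hu))]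
            calc ∑ l ∈ trees n u, ∑ r ∈ trees n ((s.erase a) \ u),
                  (2:ℚ)^(KT.node a ![l, r]).pv
                = ∑ l ∈ trees n u, ∑ r ∈ trees n ((s.erase a) \ u),
                  (if ∀ b ∈ (s.erase a).val, a ≤ b then 2 else 1) *
                    ((2:ℚ)^l.pv * (2:ℚ)^r.pv) := by
                  apply Finset.sum_congr rfl; intro l hl
                  apply Finset.sum_congr rfl; intro r hr
                  exact hpt l hl r hr
              _ = (if ∀ b ∈ (s.erase a).val, a ≤ b then 2 else 1) *
                    ((∑ l ∈ trees n u, (2:ℚ)^l.pv) * (∑ r ∈ trees n ((s.erase a) \ u), (2:ℚ)^r.pv)) := by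
                  rw [Finset.sum_mul_sum, Finset.mul_sum]
                  apply Finset.sum_congr rfl; intro l _
                  rw [Finset.mul_sum]
              _ = (if ∀ b ∈ (s.erase a).val, a ≤ b then 2 else 1) *
                    (Fq u.card * Fq (m-1-u.card)) := by
                  rw [ih (hucard a ha u hu), ih (hrcard a ha u),
                    Finset.card_sdiff_of_subset (Finset.mem_powerset.mp hu), herase a ha]
          · rintro ⟨l, r⟩ h1 ⟨l', r'⟩ h2 hT
            have hvec : (![l, r] : Fin 2 → KT 2) = ![l', r'] := by injection hT
            have : l = l' := congrFun hvec 0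
            have : r = r' := congrFun hvec 1
            simp_all
        rw [Finset.sum_congr rfl hstep, ← Finset.mul_sum]
        congr 1
        -- powerset sum by cardinality
        rw [Finset.powerset_card_disjiUnion]
        erw [Finset.sum_disjiUnion, herase a ha]
        have hr1 : m - 1 + 1 = m := by omega
        rw [hr1]
        apply Finset.sum_congr rfl
        intro k hk
        have : ∀ u ∈ Finset.powersetCard k (s.erase a),
            Fq u.card * Fq (m-1-u.card) = Fq k * Fq (m-1-k) := by
          intro u hu
          rw [(Finset.mem_powersetCard.mp hu).2]
        rw [Finset.sum_congr rfl this, Finset.sum_const, Finset.card_powersetCard,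
          herase a ha, nsmul_eq_mul]
      rw [Finset.sum_congr rfl hinner, ← Finset.sum_mul]
      -- the min element
      have hmin : (∑ a ∈ s, (if ∀ b ∈ (s.erase a).val, a ≤ b then (2:ℚ) else 1)) = (m:ℚ) + 1 := by
        set a₀ := s.min' (Finset.nonempty_iff_ne_empty.mpr hempty) with ha₀
        have hiff : ∀ a ∈ s, ((∀ b ∈ (s.erase a).val, a ≤ b) ↔ a = a₀) := by
          intro a ha
          constructor
          · intro h
            by_contra hne
            have h1 : a₀ ∈ s.erase a := Finset.mem_erase.mpr
              ⟨fun he => hne he.symm, s.min'_mem _⟩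
            have h2 : a ≤ a₀ := h a₀ (Finset.mem_def.mp h1)
            have h3 : a₀ ≤ a := s.min'_le a ha
            exact hne (le_antisymm h2 h3)
          · rintro rfl b hb
            exact s.min'_le b (Finset.mem_of_mem_erase (Finset.mem_def.mpr hb))
        calc (∑ a ∈ s, (if ∀ b ∈ (s.erase a).val, a ≤ b then (2:ℚ) else 1))
            = ∑ a ∈ s, ((if a = a₀ then (1:ℚ) else 0) + 1) := by
              apply Finset.sum_congr rfl
              intro a ha
              rw [if_congr (hiff a ha) rfl rfl]
              by_cases h : a = a₀ <;> simp [h] <;> norm_num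
          _ = (m:ℚ) + 1 := by
              rw [Finset.sum_add_distrib, Finset.sum_const, Finset.sum_ite_eq',
                if_pos (s.min'_mem _), nsmul_eq_mul, mul_one]
              ring
      rw [hmin]
      -- finish with the recurrence
      have hq : m - 1 + 1 = m := by omega
      have := Fq_rec (m - 1)
      rw [hq] at this
      rw [this]
      have hc : ((m - 1 : ℕ) : ℚ) + 2 = (m:ℚ) + 1 := by
        have : ((m - 1 : ℕ) : ℚ) = (m:ℚ) - 1 := by
          push_cast [Nat.cast_sub hs1]; ring
        rw [this]; ring
      rw [hc]
      congr 1
      apply Finset.sum_congr rfl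
      intro k _
      ring

open scoped Classical

/-- `ℬ_n = 𝒜²_n`, the binary trees on `[n]`. For `n ≥ 1`,
`Σ_{T ∈ ℬ_n} 2^{pv(T)} = 2^n (n+1)^(n−1)`; equivalently the evaluation at `t = 2` of
`t·Π_{i=1}^{n−1}((i+1)t + 2(n−i))` equals `2^n (n+1)^(n−1)`. -/
theorem binary_eval_two (n : ℕ) (hn : 1 ≤ n) :
    (∑ᶠ T : KTn 2 n, (2 : ℚ) ^ T.1.pv) = 2 ^ n * (n + 1) ^ (n - 1) ∧
      (2 : ℚ) * ∏ i ∈ Finset.Icc 1 (n - 1),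
          (((i : ℚ) + 1) * 2 + 2 * ((n - i : ℕ) : ℚ)) =
        2 ^ n * (n + 1) ^ (n - 1) := by
  constructor
  · have hc : (Finset.Icc 1 n).card ≤ n := by simp [Nat.card_Icc]
    have h1 : (∑ᶠ T : KTn 2 n, (2:ℚ) ^ T.1.pv)
        = ∑ᶠ (T : KT 2) (_ : T.labels = (Finset.Icc 1 n).val), (2:ℚ)^T.pv :=
      finsum_subtype_eq_finsum_cond (f := fun T : KT 2 => (2:ℚ)^T.pv) _
    rw [h1]
    have h2 : ∀ T : KT 2, (∑ᶠ _ : T.labels = (Finset.Icc 1 n).val, (2:ℚ)^T.pv)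
        = ∑ᶠ _ : T ∈ trees n (Finset.Icc 1 n), (2:ℚ)^T.pv := by
      intro T
      rw [finsum_eq_if, finsum_eq_if, if_congr (Iff.symm (mem_trees hc)) rfl rfl]
    rw [finsum_congr h2]
    have h3 : (∑ᶠ (T : KT 2) (_ : T ∈ trees n (Finset.Icc 1 n)), (2:ℚ)^T.pv)
        = ∑ T ∈ trees n (Finset.Icc 1 n), (2:ℚ)^T.pv := by
      rw [← finsum_mem_coe_finset]
      rfl
    rw [h3, sum_trees hc]
    simp [Fq, Nat.card_Icc]
  · have hprod : ∀ i ∈ Finset.Icc 1 (n-1),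
        (((i:ℚ)) + 1) * 2 + 2 * ((n - i : ℕ) : ℚ) = 2 * ((n:ℚ)+1) := by
      intro i hi
      obtain ⟨hi1, hi2⟩ := Finset.mem_Icc.mp hi
      have hin : i ≤ n := by omega
      rw [Nat.cast_sub hin]
      ring
    rw [Finset.prod_congr rfl hprod, Finset.prod_const, Nat.card_Icc]
    have he : n - 1 + 1 - 1 = n - 1 := by omega
    rw [he, mul_pow, ← mul_assoc]
    have h2 : (2:ℚ) * 2^(n-1) = 2^n := by
      rw [← pow_succ']
      congr 1
      omega
    rw [h2]
end

section
/- Fix a parameter t. Let p_n(t) = Σ_{P ∈ 𝒫ℱ_n} t^{pv(P)} (with p_0(t) = 1) and let P(x) = Σ_{n≥0} p_n(t) x^n / n! as a formal power series. Then P satisfies the differential equation P' = x·P^2·P' + t·P^3 with P(0) = 1. -/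
/-- Labeled plane trees: a root label together with a linearly ordered list of subtrees. -/
inductive PT : Type
  | node (label : ℕ) (children : List PT) : PT

/-- The multiset of labels of a plane tree. -/
def PT.labels : PT → Multiset ℕ
  | .node a ch => a ::ₘ (ch.attach.map fun c => PT.labels c.1).sum
decreasing_by
  have := List.sizeOf_lt_of_mem c.2
  simp only [PT.node.sizeOf_spec]
  omega

/-- The number of *proper* vertices of a plane tree: a vertex is proper if its label is
the smallest label in its descendant subtree (including itself). -/
def PT.pv : PT → ℕ
  | .node a ch =>
      (if ∀ b ∈ (ch.map PT.labels).sum, a ≤ b then 1 else 0)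
        + (ch.attach.map fun c => PT.pv c.1).sum
decreasing_by
  have := List.sizeOf_lt_of_mem c.2
  simp only [PT.node.sizeOf_spec]
  omega

/-- `𝒫ℱ_n`: plane forests on `[n]`, i.e. sequences of (nonempty) plane trees whose
label sets are disjoint with union `[n] = {1,…,n}`. -/
def PF (n : ℕ) : Type :=
  {l : List PT // (l.map PT.labels).sum = (Finset.Icc 1 n).val}

/-- The number of proper vertices of a plane forest. -/
def pvPF (l : List PT) : ℕ := (l.map PT.pv).sum

/-- `p_n(t) = Σ_{P ∈ 𝒫ℱ_n} t^{pv(P)}` (so `p_0(t) = 1`). -/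
noncomputable def pPoly (n : ℕ) (t : ℚ) : ℚ := ∑ᶠ F : PF n, t ^ pvPF F.1

lemma PT.labels_node (a : ℕ) (ch : List PT) :
    PT.labels (.node a ch) = a ::ₘ (ch.map PT.labels).sum := by
  rw [PT.labels]; congr 1; congr 1; exact List.attach_map_val (l := ch) (f := PT.labels)

lemma PT.pv_node (a : ℕ) (ch : List PT) :
    PT.pv (.node a ch) =
      (if ∀ b ∈ (ch.map PT.labels).sum, a ≤ b then 1 else 0) + (ch.map PT.pv).sum := by
  rw [PT.pv]; congr 1; congr 1; exact List.attach_map_val (l := ch) (f := PT.pv)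

/-- The set of forests with given label multiset. -/
def Sset (μ : Multiset ℕ) : Set (List PT) := {l | (l.map PT.labels).sum = μ}

lemma mem_Sset {μ : Multiset ℕ} {l : List PT} : l ∈ Sset μ ↔ (l.map PT.labels).sum = μ :=
  Iff.rfl

lemma Sset_zero : Sset 0 = {([] : List PT)} := by
  ext l
  simp only [mem_Sset, Set.mem_singleton_iff]
  constructor
  · intro h
    cases l with
    | nil => rfl
    | cons p rest =>
      exfalso
      cases p with
      | node a ch =>
        simp only [List.map_cons, List.sum_cons, PT.labels_node] at h
        have : a ∈ (0 : Multiset ℕ) := by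
          rw [← h]; simp
        simp at this
  · rintro rfl; simp [Sset]

lemma forest_decomp {μ : Multiset ℕ} {a : ℕ} {ch rest : List PT}
    (h : (PT.node a ch :: rest : List PT) ∈ Sset μ) :
    a ∈ μ ∧ (ch.map PT.labels).sum ≤ μ.erase a ∧
      rest ∈ Sset (μ - (a ::ₘ (ch.map PT.labels).sum)) ∧ a ::ₘ (ch.map PT.labels).sum ≤ μ := by
  rw [mem_Sset, List.map_cons, List.sum_cons, PT.labels_node] at h
  subst h
  refine ⟨by simp, ?_, ?_, ?_⟩
  · rw [Multiset.cons_add, Multiset.erase_cons_head]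
    exact Multiset.le_add_right _ _
  · rw [mem_Sset, add_comm, add_tsub_cancel_right]
  · exact Multiset.le_add_right _ _

lemma cons_le_of_mem {μ : Multiset ℕ} {a : ℕ} {ν : Multiset ℕ} (ha : a ∈ μ)
    (hν : ν ≤ μ.erase a) : a ::ₘ ν ≤ μ := by
  calc a ::ₘ ν ≤ a ::ₘ μ.erase a := Multiset.cons_le_cons a hν
  _ = μ := Multiset.cons_erase ha

lemma finite_Sset (μ : Multiset ℕ) : (Sset μ).Finite := by
  generalize hn : Multiset.card μ = n
  induction n using Nat.strong_induction_on generalizing μ with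
  | _ n ih =>
    rcases eq_or_ne μ 0 with rfl | hμ
    · rw [Sset_zero]; exact Set.finite_singleton _
    · have hcpos : 0 < Multiset.card μ := Multiset.card_pos.2 hμ
      apply Set.Finite.subset (s := ⋃ a ∈ (μ.toFinset : Set ℕ),
        ⋃ ν ∈ ((μ.erase a).powerset.toFinset : Set (Multiset ℕ)),
          (fun p : List PT × List PT => PT.node a p.1 :: p.2) ''
            ((Sset ν) ×ˢ (Sset (μ - (a ::ₘ ν)))))
      · apply Set.Finite.biUnion (μ.toFinset.finite_toSet)
        intro a ha
        simp only [Finset.mem_coe, Multiset.mem_toFinset] at ha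
        apply Set.Finite.biUnion ((μ.erase a).powerset.toFinset.finite_toSet)
        intro ν hν
        simp only [Finset.mem_coe, Multiset.mem_toFinset, Multiset.mem_powerset] at hν
        have hle : a ::ₘ ν ≤ μ := cons_le_of_mem ha hν
        have h1 : Multiset.card ν < n := by
          have := Multiset.card_le_card hν
          rw [Multiset.card_erase_of_mem ha, Nat.pred_eq_sub_one] at this
          omega
        have h2 : Multiset.card (μ - (a ::ₘ ν)) < n := by
          rw [Multiset.card_sub hle, Multiset.card_cons]
          omega
        exact Set.Finite.image _ (Set.Finite.prod (ih _ h1 _ rfl) (ih _ h2 _ rfl))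
      · rintro l hl
        cases l with
        | nil =>
          exfalso; rw [mem_Sset] at hl; simp at hl; exact hμ hl.symm
        | cons p rest =>
          cases p with
          | node a ch =>
            obtain ⟨ha, hch, hrest, _⟩ := forest_decomp hl
            simp only [Set.mem_iUnion, Finset.mem_coe, Multiset.mem_toFinset,
              Multiset.mem_powerset, Set.mem_image, Set.mem_prod, Prod.exists]
            exact ⟨a, ha, (ch.map PT.labels).sum, hch, ch, rest, ⟨rfl, hrest⟩, rfl⟩

noncomputable def FSm (μ : Multiset ℕ) : Finset (List PT) := (finite_Sset μ).toFinset

lemma mem_FSm {μ : Multiset ℕ} {l : List PT} : l ∈ FSm μ ↔ (l.map PT.labels).sum = μ := by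
  rw [FSm, Set.Finite.mem_toFinset]; exact Iff.rfl

noncomputable def gF (t : ℚ) (s : Finset ℕ) : ℚ := ∑ l ∈ FSm s.val, t ^ pvPF l

lemma pPoly_eq_gF (n : ℕ) (t : ℚ) : pPoly n t = gF t (Finset.Icc 1 n) := by
  have h1 := @finsum_subtype_eq_finsum_cond (List PT) ℚ _ (fun l => t ^ pvPF l)
    (fun l => l ∈ Sset (Finset.Icc 1 n).val)
  have h2 := finsum_mem_eq_finite_toFinset_sum (fun l => t ^ pvPF l) (finite_Sset (Finset.Icc 1 n).val)
  rw [pPoly, gF]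
  exact (h1.trans h2).trans rfl

def hdLabel : List PT → ℕ | (.node a _) :: _ => a | [] => 0
def hdCh : List PT → List PT | (.node _ ch) :: _ => ch | [] => []

lemma pvPF_cons (a : ℕ) (ch rest : List PT) :
    pvPF (PT.node a ch :: rest) =
      ((if ∀ b ∈ (ch.map PT.labels).sum, a ≤ b then 1 else 0) + pvPF ch) + pvPF rest := by
  simp only [pvPF, List.map_cons, List.sum_cons, PT.pv_node]

lemma gF_decomp (t : ℚ) (s : Finset ℕ) (hs : s.Nonempty) :
    gF t s = ∑ a ∈ s, ∑ B ∈ (s.erase a).powerset,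
      (if ∀ b ∈ B, a ≤ b then t else 1) * (gF t B * gF t (s.erase a \ B)) := by
  classical
  have key : (∑ l ∈ FSm s.val, t ^ pvPF l) =
      ∑ q ∈ ((s.sigma fun a => (s.erase a).powerset).sigma
          fun p => FSm p.2.val ×ˢ FSm ((s.erase p.1 \ p.2)).val),
        (if ∀ b ∈ q.1.2, q.1.1 ≤ b then t else 1) * (t ^ pvPF q.2.1 * t ^ pvPF q.2.2) := by
    apply Finset.sum_nbij'
      (i := fun l => ⟨⟨hdLabel l, ((hdCh l).map PT.labels).sum.toFinset⟩, (hdCh l, l.tail)⟩)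
      (j := fun q => PT.node q.1.1 q.2.1 :: q.2.2)
    · -- hi
      intro l hl
      rw [mem_FSm] at hl
      match l with
      | [] =>
        exfalso
        simp only [List.map_nil, List.sum_nil] at hl
        obtain ⟨x, hx⟩ := hs
        have hx' : x ∈ s.val := hx
        rw [← hl] at hx'
        simp at hx'
      | (PT.node a ch) :: rest =>
        obtain ⟨ha, hch, hrest, hle⟩ := forest_decomp (mem_Sset.2 hl)
        simp only [hdLabel, hdCh, List.tail_cons]
        set L := (ch.map PT.labels).sum with hL
        have hnd : L.Nodup := Multiset.nodup_of_le hch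
          (by rw [← Finset.erase_val]; exact (s.erase a).nodup)
        have hBval : L.toFinset.val = L := by
          rw [Multiset.toFinset_val, Multiset.dedup_eq_self.2 hnd]
        rw [Finset.mem_sigma, Finset.mem_sigma, Finset.mem_product]
        dsimp only
        refine ⟨⟨by rwa [← Finset.mem_def] at ha, ?_⟩, ?_, ?_⟩
        · rw [Finset.mem_powerset]
          intro b hb
          rw [Finset.mem_def, Finset.erase_val]
          exact Multiset.mem_of_le hch (Multiset.mem_toFinset.1 hb)
        · rw [mem_FSm, hBval]
        · rw [mem_FSm]
          rw [mem_Sset] at hrest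
          rw [hrest, Finset.sdiff_val, Finset.erase_val, hBval]
          rw [← Multiset.singleton_add, tsub_add_eq_tsub_tsub, Multiset.sub_singleton]
    · -- hj
      rintro ⟨⟨a, B⟩, ch, rest⟩ hq
      rw [Finset.mem_sigma, Finset.mem_sigma, Finset.mem_product] at hq
      obtain ⟨⟨ha, hB⟩, hch, hrest⟩ := hq
      rw [Finset.mem_powerset] at hB
      rw [mem_FSm] at hch hrest
      rw [mem_FSm, List.map_cons, List.sum_cons, PT.labels_node, hch, hrest,
        Finset.sdiff_val, Finset.erase_val, Multiset.cons_add]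
      have hBle : B.val ≤ s.val.erase a := by
        rw [← Finset.erase_val]
        exact Finset.val_le_iff.2 hB
      rw [add_comm, tsub_add_cancel_of_le hBle, Multiset.cons_erase (by rwa [Finset.mem_def] at ha)]
    · -- left inverse
      intro l hl
      rw [mem_FSm] at hl
      match l with
      | [] =>
        exfalso
        simp only [List.map_nil, List.sum_nil] at hl
        obtain ⟨x, hx⟩ := hs
        have hx' : x ∈ s.val := hx
        rw [← hl] at hx'
        simp at hx'
      | (PT.node a ch) :: rest => rfl
    · -- right inverse
      rintro ⟨⟨a, B⟩, ch, rest⟩ hq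
      rw [Finset.mem_sigma, Finset.mem_sigma, Finset.mem_product] at hq
      obtain ⟨⟨ha, hB⟩, hch, hrest⟩ := hq
      rw [mem_FSm] at hch
      simp only [hdLabel, hdCh, List.tail_cons, hch, Finset.val_toFinset]
    · -- weights
      intro l hl
      rw [mem_FSm] at hl
      match l with
      | [] =>
        exfalso
        simp only [List.map_nil, List.sum_nil] at hl
        obtain ⟨x, hx⟩ := hs
        have hx' : x ∈ s.val := hx
        rw [← hl] at hx'
        simp at hx'
      | (PT.node a ch) :: rest =>
        simp only [hdLabel, hdCh, List.tail_cons, pvPF_cons]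
        have hcond : (∀ b ∈ ((ch.map PT.labels).sum).toFinset, a ≤ b) ↔
            (∀ b ∈ (ch.map PT.labels).sum, a ≤ b) := by
          constructor
          · intro h b hb; exact h b (Multiset.mem_toFinset.2 hb)
          · intro h b hb; exact h b (Multiset.mem_toFinset.1 hb)
        rw [pow_add, pow_add]
        by_cases hc : ∀ b ∈ (ch.map PT.labels).sum, a ≤ b
        · simp only [hcond, if_pos hc, pow_one]; ring
        · simp only [hcond, hc, ite_false, pow_zero]; ring
  rw [gF, key, Finset.sum_sigma, Finset.sum_sigma]
  refine Finset.sum_congr rfl fun a _ => Finset.sum_congr rfl fun B _ => ?_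
  rw [Finset.sum_product]
  dsimp only
  rw [gF, gF, Finset.sum_mul_sum, Finset.mul_sum]
  refine Finset.sum_congr rfl fun ch _ => ?_
  rw [Finset.mul_sum]

lemma inner_count (t : ℚ) (S : Finset ℕ) (hne : S.Nonempty) :
    ∑ a ∈ S, (if ∀ b ∈ S.erase a, a ≤ b then t else 1) = t + (S.card - 1 : ℕ) := by
  classical
  have hmem := S.min'_mem hne
  have key : ∀ a ∈ S, (if ∀ b ∈ S.erase a, a ≤ b then t else 1)
      = 1 + if a = S.min' hne then t - 1 else 0 := by
    intro a ha
    by_cases hamin : a = S.min' hne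
    · subst hamin
      rw [if_pos, if_pos rfl]; · ring
      intro b hb
      exact S.min'_le b (Finset.mem_of_mem_erase hb)
    · rw [if_neg, if_neg hamin]; · ring
      intro hcon
      exact hamin (le_antisymm (hcon _ (Finset.mem_erase.2 ⟨Ne.symm hamin, hmem⟩)) (S.min'_le a ha))
  rw [Finset.sum_congr rfl key, Finset.sum_add_distrib, Finset.sum_ite_eq' S (S.min' hne) (fun _ => t - 1)]
  rw [if_pos hmem]
  simp only [Finset.sum_const, nsmul_eq_mul, mul_one]
  have : 1 ≤ S.card := Finset.card_pos.2 hne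
  have h2 : ((S.card - 1 : ℕ) : ℚ) = (S.card : ℚ) - 1 := by
    push_cast [this]; ring
  rw [h2]; ring

lemma count_lemma (t : ℚ) (s : Finset ℕ) (k : ℕ) :
    ∑ a ∈ s, ∑ B ∈ Finset.powersetCard k (s.erase a), (if ∀ b ∈ B, a ≤ b then t else 1)
      = (s.card.choose (k + 1) : ℚ) * (t + k) := by
  classical
  have key : (∑ q ∈ s.sigma (fun a => Finset.powersetCard k (s.erase a)),
        (if ∀ b ∈ q.2, q.1 ≤ b then t else 1)) =
      ∑ q ∈ (Finset.powersetCard (k+1) s).sigma (fun S => S),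
        (if ∀ b ∈ q.1.erase q.2, q.2 ≤ b then t else 1) := by
    apply Finset.sum_nbij' (i := fun p => (⟨insert p.1 p.2, p.1⟩ : (_ : Finset ℕ) × ℕ))
      (j := fun q => (⟨q.2, q.1.erase q.2⟩ : (_ : ℕ) × Finset ℕ))
    · rintro ⟨a, B⟩ hp
      rw [Finset.mem_sigma] at hp
      obtain ⟨ha, hB⟩ := hp
      rw [Finset.mem_powersetCard] at hB
      obtain ⟨hBsub, hBcard⟩ := hB
      have hanotB : a ∉ B := fun h => (Finset.mem_erase.1 (hBsub h)).1 rfl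
      rw [Finset.mem_sigma]
      constructor
      · rw [Finset.mem_powersetCard]
        constructor
        · intro x hx
          rcases Finset.mem_insert.1 hx with rfl | hx
          · exact ha
          · exact Finset.mem_of_mem_erase (hBsub hx)
        · rw [Finset.card_insert_of_notMem hanotB, hBcard]
      · exact Finset.mem_insert_self _ _
    · rintro ⟨S, a⟩ hq
      rw [Finset.mem_sigma] at hq
      obtain ⟨hS, haS⟩ := hq
      rw [Finset.mem_powersetCard] at hS
      rw [Finset.mem_sigma]
      constructor
      · exact hS.1 haS
      · rw [Finset.mem_powersetCard]
        refine ⟨Finset.erase_subset_erase _ hS.1, ?_⟩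
        rw [Finset.card_erase_of_mem haS, hS.2]
        rfl
    · rintro ⟨a, B⟩ hp
      rw [Finset.mem_sigma] at hp
      obtain ⟨ha, hB⟩ := hp
      rw [Finset.mem_powersetCard] at hB
      have hanotB : a ∉ B := fun h => (Finset.mem_erase.1 (hB.1 h)).1 rfl
      simp only [Finset.erase_insert hanotB]
    · rintro ⟨S, a⟩ hq
      rw [Finset.mem_sigma] at hq
      simp only [Finset.insert_erase hq.2]
    · rintro ⟨a, B⟩ hp
      rw [Finset.mem_sigma] at hp
      obtain ⟨ha, hB⟩ := hp
      rw [Finset.mem_powersetCard] at hB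
      have hanotB : a ∉ B := fun h => (Finset.mem_erase.1 (hB.1 h)).1 rfl
      simp only [Finset.erase_insert hanotB]
  rw [← Finset.sum_sigma s (fun a => Finset.powersetCard k (s.erase a))
    (fun q => if ∀ b ∈ q.2, q.1 ≤ b then t else 1), key,
    Finset.sum_sigma (Finset.powersetCard (k+1) s) (fun S => S)
    (fun q => if ∀ b ∈ q.1.erase q.2, q.2 ≤ b then t else 1)]
  have inner : ∀ S ∈ Finset.powersetCard (k+1) s,
      (∑ a ∈ S, if ∀ b ∈ S.erase a, a ≤ b then t else 1) = t + k := by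
    intro S hS
    rw [Finset.mem_powersetCard] at hS
    have hne : S.Nonempty := by
      rw [← Finset.card_pos, hS.2]; omega
    rw [inner_count t S hne, hS.2]
    norm_num
  rw [Finset.sum_congr rfl inner, Finset.sum_const, Finset.card_powersetCard, nsmul_eq_mul]

lemma gF_chain (t : ℚ) (n : ℕ) (hn : 0 < n) (G : ℕ → ℚ)
    (H : ∀ u : Finset ℕ, u.card < n → gF t u = G u.card)
    (s : Finset ℕ) (hcard : s.card = n) :
    gF t s = ∑ k ∈ Finset.range n,
      ((n.choose (k+1) : ℚ) * (t + k)) * (G k * G (n-1-k)) := by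
  classical
  have hs : s.Nonempty := by
    rw [← Finset.card_pos, hcard]; exact hn
  calc gF t s
      = ∑ a ∈ s, ∑ k ∈ Finset.range n, ∑ B ∈ Finset.powersetCard k (s.erase a),
          (if ∀ b ∈ B, a ≤ b then t else 1) * (G k * G (n-1-k)) := by
        rw [gF_decomp t s hs]
        refine Finset.sum_congr rfl fun a ha => ?_
        rw [Finset.sum_powerset]
        have hcerase : (s.erase a).card = n - 1 := by
          rw [Finset.card_erase_of_mem ha, hcard]
        rw [hcerase, show n - 1 + 1 = n by omega]
        refine Finset.sum_congr rfl fun k hk => Finset.sum_congr rfl fun B hB => ?_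
        rw [Finset.mem_range] at hk
        rw [Finset.mem_powersetCard] at hB
        have h1 : B.card = k := hB.2
        have h2 : (s.erase a \ B).card = n - 1 - k := by
          rw [Finset.card_sdiff_of_subset hB.1, hcerase, h1]
        rw [H B (by omega), H (s.erase a \ B) (by rw [h2]; omega), h1, h2]
    _ = ∑ k ∈ Finset.range n, ((n.choose (k+1) : ℚ) * (t + k)) * (G k * G (n-1-k)) := by
        rw [Finset.sum_comm]
        refine Finset.sum_congr rfl fun k hk => ?_
        simp only [← Finset.sum_mul]
        rw [count_lemma t s k, hcard]

lemma gF_card_eq (t : ℚ) : ∀ (n : ℕ) (s s' : Finset ℕ), s.card = n → s'.card = n →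
    gF t s = gF t s' := by
  intro n
  induction n using Nat.strong_induction_on with
  | _ n ih =>
    intro s s' hs hs'
    rcases Nat.eq_zero_or_pos n with rfl | hn
    · rw [Finset.card_eq_zero] at hs hs'
      rw [hs, hs']
    · have H : ∀ u : Finset ℕ, u.card < n → gF t u = gF t (Finset.range u.card) :=
        fun u hu => ih u.card hu u (Finset.range u.card) rfl (Finset.card_range _)
      rw [gF_chain t n hn (fun k => gF t (Finset.range k)) H s hs,
        gF_chain t n hn (fun k => gF t (Finset.range k)) H s' hs']

lemma FSm_zero : FSm 0 = ({[]} : Finset (List PT)) := by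
  ext l
  rw [Finset.mem_singleton, mem_FSm, ← mem_Sset, Sset_zero]
  exact Set.mem_singleton_iff

lemma pPoly_zero (t : ℚ) : pPoly 0 t = 1 := by
  rw [pPoly_eq_gF, gF]
  have : (Finset.Icc 1 0).val = 0 := by simp
  rw [this, FSm_zero, Finset.sum_singleton]
  simp [pvPF]

lemma card_Icc_one (m : ℕ) : (Finset.Icc 1 m).card = m := by
  rw [Nat.card_Icc]; omega

lemma pPoly_succ (m : ℕ) (t : ℚ) : pPoly (m+1) t =
    ∑ k ∈ Finset.range (m+1),
      (((m+1).choose (k+1) : ℚ) * (t + k)) * (pPoly k t * pPoly (m-k) t) := by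
  have H : ∀ u : Finset ℕ, u.card < m + 1 → gF t u = pPoly u.card t := by
    intro u hu
    rw [pPoly_eq_gF]
    exact gF_card_eq t u.card u (Finset.Icc 1 u.card) rfl (card_Icc_one _)
  rw [pPoly_eq_gF, gF_chain t (m+1) (Nat.succ_pos m) (fun k => pPoly k t) H _ (card_Icc_one _)]
  simp only [Nat.add_sub_cancel]

open PowerSeries in
lemma E1 (t : ℚ) :
    (PowerSeries.mk fun n => pPoly n t / n.factorial) =
      1 + PowerSeries.X * (PowerSeries.mk fun k => (t + k) * pPoly k t / (k+1).factorial) *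
        (PowerSeries.mk fun n => pPoly n t / n.factorial) := by
  ext n
  rw [map_add]
  cases n with
  | zero =>
    rw [coeff_mk, mul_assoc, coeff_zero_X_mul]
    simp [pPoly_zero]
  | succ n =>
    rw [coeff_mk, mul_assoc, coeff_succ_X_mul, coeff_mul,
      Finset.Nat.sum_antidiagonal_eq_sum_range_succ_mk]
    have h1 : (PowerSeries.coeff (n+1)) (1 : PowerSeries ℚ) = 0 := by
      rw [PowerSeries.coeff_one]; simp
    rw [h1, zero_add, pPoly_succ, Finset.sum_div]
    refine Finset.sum_congr rfl fun k hk => ?_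
    rw [Finset.mem_range] at hk
    rw [coeff_mk, coeff_mk]
    have hc : (((n+1).choose (k+1) : ℕ) : ℚ) * (k+1).factorial * (n-k).factorial
        = (n+1).factorial := by
      have := Nat.choose_mul_factorial_mul_factorial (n := n+1) (k := k+1) (by omega)
      rw [show n + 1 - (k+1) = n - k by omega] at this
      exact_mod_cast this
    have f1 : ((k+1).factorial : ℚ) ≠ 0 := Nat.cast_ne_zero.2 (Nat.factorial_ne_zero _)
    have f2 : ((n-k).factorial : ℚ) ≠ 0 := Nat.cast_ne_zero.2 (Nat.factorial_ne_zero _)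
    have f3 : ((n+1).factorial : ℚ) ≠ 0 := Nat.cast_ne_zero.2 (Nat.factorial_ne_zero _)
    field_simp
    linear_combination ((t + k) * pPoly k t * pPoly (n-k) t) * hc

open PowerSeries in
lemma E2 (t : ℚ) :
    (PowerSeries.derivative ℚ)
        (PowerSeries.X * (PowerSeries.mk fun k => (t + k) * pPoly k t / (k+1).factorial)) =
      PowerSeries.C t * (PowerSeries.mk fun n => pPoly n t / n.factorial) +
        PowerSeries.X * (PowerSeries.derivative ℚ (PowerSeries.mk fun n => pPoly n t / n.factorial)) := by
  ext n
  rw [map_add, PowerSeries.coeff_derivative, coeff_succ_X_mul, coeff_mk, coeff_C_mul, coeff_mk]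
  have f0 : ((n).factorial : ℚ) ≠ 0 := Nat.cast_ne_zero.2 (Nat.factorial_ne_zero _)
  cases n with
  | zero =>
    rw [coeff_zero_X_mul]
    simp [Nat.factorial]
  | succ m =>
    rw [coeff_succ_X_mul, PowerSeries.coeff_derivative, coeff_mk]
    have hfs : ((m+1+1).factorial : ℚ) = ((m+1+1 : ℕ) : ℚ) * ((m+1).factorial : ℚ) := by
      rw [Nat.factorial_succ]; push_cast; ring
    have hfs2 : ((m+1).factorial : ℚ) = ((m+1 : ℕ) : ℚ) * ((m).factorial : ℚ) := by
      rw [Nat.factorial_succ]; push_cast; ring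
    have f1 : ((m+1).factorial : ℚ) ≠ 0 := Nat.cast_ne_zero.2 (Nat.factorial_ne_zero _)
    have f2 : ((m).factorial : ℚ) ≠ 0 := Nat.cast_ne_zero.2 (Nat.factorial_ne_zero _)
    have f3 : ((m:ℚ)+1) ≠ 0 := by positivity
    rw [hfs]
    field_simp
    push_cast
    ring

/-- The exponential generating function `P(x) = Σ_{n ≥ 0} p_n(t) xⁿ/n!` of the
proper-vertex enumerator of plane forests satisfies `P' = x·P²·P' + t·P³`, `P(0) = 1`. -/
theorem planeForest_ODE (t : ℚ) :
    PowerSeries.constantCoeff (PowerSeries.mk fun n => pPoly n t / n.factorial) = 1 ∧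
      PowerSeries.derivative ℚ (PowerSeries.mk fun n => pPoly n t / n.factorial) =
        PowerSeries.X * (PowerSeries.mk fun n => pPoly n t / n.factorial) ^ 2 *
            PowerSeries.derivative ℚ (PowerSeries.mk fun n => pPoly n t / n.factorial) +
          PowerSeries.C t * (PowerSeries.mk fun n => pPoly n t / n.factorial) ^ 3 := by
  constructor
  · rw [← PowerSeries.coeff_zero_eq_constantCoeff_apply, PowerSeries.coeff_mk]
    simp [pPoly_zero]
  · set P := PowerSeries.mk fun n => pPoly n t / n.factorial with hP
    set Q := PowerSeries.mk fun k => (t + k) * pPoly k t / (k+1).factorial with hQ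
    set D := PowerSeries.derivative ℚ with hD
    have e1 : P = 1 + PowerSeries.X * Q * P := E1 t
    have e2 : D (PowerSeries.X * Q) = PowerSeries.C t * P + PowerSeries.X * D P := E2 t
    have e3 : D P = (PowerSeries.C t * P + PowerSeries.X * D P) * P
        + (PowerSeries.X * Q) * D P := by
      conv_lhs => rw [e1]
      rw [map_add, Derivation.map_one_eq_zero, zero_add, Derivation.leibniz,
        smul_eq_mul, smul_eq_mul, e2]
      ring
    linear_combination P * e3 - D P * e1
end
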